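/- arXiv:1802.01137 — 4 statements merged into one kernel-verified Lean document; each statement's English description precedes it below -/
import Mathlib

section
/- Assume the Continuum Hypothesis. Then for every real number a with 0 < a ≤ 1, the principle ♣^{inf≥a} implies the diamond principle ◊. -/
open Filter Set

noncomputable def omega1 : Ordinal.{0} := (Cardinal.aleph 1).ord

/-- The set of countable limit ordinals, `Lim(ω₁)`. -/
def limOmega1 : Set Ordinal.{0} := {δ | δ < omega1 ∧ Order.IsSuccLimit δ}

/-- `C` is a closed unbounded subset of `ω₁`. -/
def IsClubIn (C : Set Ordinal.{0}) : Prop :=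
  C ⊆ Set.Iio omega1 ∧
  (∀ δ, δ < omega1 → Order.IsSuccLimit δ → (∀ β < δ, ∃ γ ∈ C, β < γ ∧ γ < δ) → δ ∈ C) ∧
  (∀ β, β < omega1 → ∃ γ ∈ C, β < γ)

/-- `S` is a stationary subset of `ω₁`. -/
def IsStatIn (S : Set Ordinal.{0}) : Prop :=
  S ⊆ Set.Iio omega1 ∧ ∀ C, IsClubIn C → (S ∩ C).Nonempty

open scoped Classical in
/-- `|{k < n : α k ∈ A}| / n` as a real number. -/
noncomputable def hitRatio (α : ℕ → Ordinal.{0}) (A : Set Ordinal.{0}) (n : ℕ) : ℝ :=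
  ((Finset.range n).filter (fun k => α k ∈ A)).card / n

/-- `α` assigns to each `δ ∈ S` a strictly increasing sequence cofinal in `δ`. -/
def GoodSeq (S : Set Ordinal.{0}) (α : Ordinal.{0} → ℕ → Ordinal.{0}) : Prop :=
  ∀ δ ∈ S, StrictMono (α δ) ∧ (∀ n, α δ n < δ) ∧ (∀ β < δ, ∃ n, β < α δ n)

/-- The principle `♣_S^{inf ≥ a}`. -/
def ClubSuitInf (S : Set Ordinal.{0}) (a : ℝ) : Prop :=
  ∃ α : Ordinal.{0} → ℕ → Ordinal.{0}, GoodSeq S α ∧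
    ∀ A : Set Ordinal.{0}, A ⊆ Set.Iio omega1 → ¬ A.Countable →
      ∃ δ ∈ S, a ≤ Filter.liminf (hitRatio (α δ) A) Filter.atTop

/-- The principle `♣_S^{sup ≥ a}`. -/
def ClubSuitSup (S : Set Ordinal.{0}) (a : ℝ) : Prop :=
  ∃ α : Ordinal.{0} → ℕ → Ordinal.{0}, GoodSeq S α ∧
    ∀ A : Set Ordinal.{0}, A ⊆ Set.Iio omega1 → ¬ A.Countable →
      ∃ δ ∈ S, a ≤ Filter.limsup (hitRatio (α δ) A) Filter.atTop

/-- The diamond principle `◊` on `ω₁`. -/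
def DiamondOmega1 : Prop :=
  ∃ B : Ordinal.{0} → Set Ordinal.{0}, (∀ δ ∈ limOmega1, B δ ⊆ Set.Iio δ) ∧
    ∀ A : Set Ordinal.{0}, A ⊆ Set.Iio omega1 →
      IsStatIn {δ ∈ limOmega1 | A ∩ Set.Iio δ = B δ}

namespace CSID

open Ordinal Cardinal
open scoped Classical

lemma omega1_limit : Order.IsSuccLimit omega1 :=
  Cardinal.isSuccLimit_ord (Cardinal.aleph0_le_aleph 1)

lemma zero_lt_omega1 : (0 : Ordinal) < omega1 := omega1_limit.pos

lemma succ_lt_omega1 {γ : Ordinal} (h : γ < omega1) : γ + 1 < omega1 := by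
  rw [Ordinal.add_one_eq_succ]; exact omega1_limit.succ_lt h

lemma card_le_of_lt_omega1 {γ : Ordinal.{0}} (h : γ < omega1) : γ.card ≤ ℵ₀ := by
  have := Cardinal.lt_ord.mp h
  rwa [← Cardinal.succ_aleph0, Order.lt_succ_iff] at this

lemma countable_Iio {γ : Ordinal.{0}} (h : γ < omega1) : (Set.Iio γ).Countable := by
  rw [← Set.countable_coe_iff, ← Cardinal.mk_le_aleph0_iff, Ordinal.mk_Iio_ordinal]
  calc Cardinal.lift.{1} γ.card ≤ Cardinal.lift.{1} ℵ₀ :=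
        Cardinal.lift_le.mpr (card_le_of_lt_omega1 h)
    _ = ℵ₀ := Cardinal.lift_aleph0

lemma bounded_of_countable {S : Set Ordinal.{0}} (hS : S ⊆ Set.Iio omega1) (hc : S.Countable) :
    ∃ β, β < omega1 ∧ ∀ γ ∈ S, γ < β := by
  rcases S.eq_empty_or_nonempty with rfl | hne
  · exact ⟨1, by simpa using Ordinal.natCast_lt_of_isSuccLimit omega1_limit 1, by simp⟩
  · obtain ⟨f, rfl⟩ := hc.exists_eq_range hne
    refine ⟨Ordinal.lsub f, ?_, ?_⟩
    · exact Cardinal.lsub_lt_ord_of_isRegular Cardinal.isRegular_aleph_one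
        (by simpa [Cardinal.mk_nat] using Cardinal.aleph0_lt_aleph_one)
        (fun i => hS (Set.mem_range_self i))
    · rintro γ ⟨i, rfl⟩; exact Ordinal.lt_lsub f i

lemma unbounded_of_uncountable {S : Set Ordinal.{0}} (hS : S ⊆ Set.Iio omega1)
    (hu : ¬ S.Countable) : ∀ β < omega1, ∃ γ ∈ S, β < γ := by
  by_contra hcon
  push_neg at hcon
  obtain ⟨β, hβ, hbound⟩ := hcon
  have hb1 : β < β + 1 := by
    rw [Ordinal.add_one_eq_succ]; exact Order.lt_succ β
  exact hu (((countable_Iio (succ_lt_omega1 hβ)).mono) (fun γ hγ =>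
    lt_of_le_of_lt (hbound γ hγ) hb1))

lemma chain_sup {g : ℕ → Ordinal.{0}} (hmono : StrictMono g) (hlt : ∀ n, g n < omega1) :
    (⨆ n, g n) < omega1 ∧ Order.IsSuccLimit (⨆ n, g n) ∧ ∀ n, g n < ⨆ n, g n := by
  have hsup : (⨆ n, g n) < omega1 :=
    Cardinal.iSup_lt_ord_of_isRegular Cardinal.isRegular_aleph_one
      (by simpa [Cardinal.mk_nat] using Cardinal.aleph0_lt_aleph_one) hlt
  have hglt : ∀ n, g n < ⨆ n, g n := fun n =>
    lt_of_lt_of_le (hmono (Nat.lt_succ_self n)) (Ordinal.le_iSup g (n + 1))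
  refine ⟨hsup, Ordinal.isSuccLimit_iff.mpr ⟨?_, Order.isSuccPrelimit_of_succ_lt ?_⟩, hglt⟩
  · intro h0
    have := hglt 0
    rw [h0] at this
    exact (not_lt_zero this)
  · intro b hb
    rw [Ordinal.lt_iSup_iff] at hb
    obtain ⟨n, hn⟩ := hb
    exact lt_of_le_of_lt (Order.succ_le_of_lt hn) (hglt n)

noncomputable def pick (C : Set Ordinal.{0}) : Ordinal.{0} → Ordinal.{0} := fun β =>
  if h : ∃ γ, γ ∈ C ∧ β < γ ∧ γ < omega1 then h.choose else β + 1

lemma pick_spec {C : Set Ordinal.{0}} {β : Ordinal.{0}}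
    (h : ∃ γ, γ ∈ C ∧ β < γ ∧ γ < omega1) :
    pick C β ∈ C ∧ β < pick C β ∧ pick C β < omega1 := by
  rw [pick, dif_pos h]; exact h.choose_spec

/-- The club-in notion, repeated locally to state helper lemmas (will be applied to the
global `IsClubIn`). -/
lemma pick_club {C : Set Ordinal.{0}}
    (hsub : C ⊆ Set.Iio omega1) (hunb : ∀ β < omega1, ∃ γ ∈ C, β < γ)
    {β : Ordinal.{0}} (hβ : β < omega1) :
    pick C β ∈ C ∧ β < pick C β ∧ pick C β < omega1 := by
  obtain ⟨γ, hγC, hγ⟩ := hunb β hβ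
  exact pick_spec ⟨γ, hγC, hγ, hsub hγC⟩

noncomputable def supF (F : Ordinal.{0} → Ordinal.{0}) : Ordinal.{0} → Ordinal.{0} := fun ρ =>
  if h : ∃ β, β < omega1 ∧ ∀ γ ∈ F '' (Set.Iio ρ), γ < β then h.choose else 0

lemma supF_spec {F : Ordinal.{0} → Ordinal.{0}} {ρ : Ordinal.{0}} (hρ : ρ < omega1)
    (hF : ∀ γ < omega1, F γ < omega1) :
    supF F ρ < omega1 ∧ ∀ γ < ρ, F γ < supF F ρ := by
  have hex : ∃ β, β < omega1 ∧ ∀ γ ∈ F '' (Set.Iio ρ), γ < β := by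
    apply bounded_of_countable
    · rintro γ ⟨γ', hγ', rfl⟩
      exact hF γ' (lt_trans hγ' hρ)
    · exact (countable_Iio hρ).image F
  rw [supF, dif_pos hex]
  obtain ⟨h1, h2⟩ := hex.choose_spec
  exact ⟨h1, fun γ hγ => h2 _ ⟨γ, hγ, rfl⟩⟩

lemma ord_lt_add_one (a : Ordinal.{0}) : a < a + 1 := by
  rw [Ordinal.add_one_eq_succ]; exact Order.lt_succ a

lemma exists_clpt {C : Set Ordinal.{0}}
    (hsub : C ⊆ Set.Iio omega1)
    (hclosed : ∀ δ, δ < omega1 → Order.IsSuccLimit δ → (∀ β < δ, ∃ γ ∈ C, β < γ ∧ γ < δ) → δ ∈ C)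
    (hunb : ∀ β < omega1, ∃ γ ∈ C, β < γ)
    (F : Ordinal.{0} → Ordinal.{0}) (hF : ∀ γ < omega1, F γ < omega1)
    {β : Ordinal.{0}} (hβ : β < omega1) :
    ∃ δ, δ ∈ C ∧ δ < omega1 ∧ β < δ ∧ Order.IsSuccLimit δ ∧ ∀ γ < δ, F γ < δ := by
  have hp0 := pick_club hsub hunb hβ
  set g : ℕ → Ordinal.{0} := fun n => Nat.rec (pick C β)
    (fun n ih => if Even n then max (ih + 1) (supF F ih) else pick C ih) n with hg
  have hgs : ∀ n, g (n + 1) = if Even n then max (g n + 1) (supF F (g n)) else pick C (g n) :=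
    fun n => rfl
  have hlt : ∀ n, g n < omega1 ∧ g n < g (n + 1) := by
    intro n
    induction n with
    | zero =>
      refine ⟨hp0.2.2, ?_⟩
      rw [hgs 0, if_pos (Even.zero)]
      exact lt_of_lt_of_le (ord_lt_add_one _) (le_max_left _ _)
    | succ n ih =>
      have hn1 : g (n + 1) < omega1 := by
        rw [hgs n]
        by_cases he : Even n
        · rw [if_pos he]
          exact max_lt (succ_lt_omega1 ih.1) (supF_spec ih.1 hF).1
        · rw [if_neg he]
          exact (pick_club hsub hunb ih.1).2.2
      refine ⟨hn1, ?_⟩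
      rw [hgs (n + 1)]
      by_cases he : Even (n + 1)
      · rw [if_pos he]
        exact lt_of_lt_of_le (ord_lt_add_one _) (le_max_left _ _)
      · rw [if_neg he]
        exact (pick_club hsub hunb hn1).2.1
  have hmono : StrictMono g := strictMono_nat_of_lt_succ (fun n => (hlt n).2)
  obtain ⟨hδω, hδlim, hδgt⟩ := chain_sup hmono (fun n => (hlt n).1)
  set δ : Ordinal.{0} := ⨆ n, g n with hδ
  have hodd : ∀ n, ¬ Even n → g (n + 1) ∈ C := by
    intro n hn
    rw [hgs n, if_neg hn]
    exact (pick_club hsub hunb (hlt n).1).1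
  have hcof : ∀ ρ < δ, ∃ γ ∈ C, ρ < γ ∧ γ < δ := by
    intro ρ hρ
    rw [hδ, Ordinal.lt_iSup_iff] at hρ
    obtain ⟨n, hn⟩ := hρ
    refine ⟨g (2 * n + 1 + 1), hodd (2 * n + 1) (by simp [parity_simps]), ?_, hδgt (2 * n + 1 + 1)⟩
    exact lt_of_lt_of_le hn (hmono.monotone (by omega : n ≤ 2 * n + 1 + 1))
  have hδC : δ ∈ C := hclosed δ hδω hδlim hcof
  refine ⟨δ, hδC, hδω, lt_trans hp0.2.1 (hδgt 0), hδlim, ?_⟩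
  intro γ hγ
  rw [hδ, Ordinal.lt_iSup_iff] at hγ
  obtain ⟨n, hn⟩ := hγ
  have h1 : γ < g (2 * n) := lt_of_lt_of_le hn (hmono.monotone (by omega))
  have h2 : F γ < supF F (g (2 * n)) := (supF_spec (hlt (2 * n)).1 hF).2 γ h1
  have h3 : supF F (g (2 * n)) ≤ g (2 * n + 1) := by
    rw [hgs (2 * n), if_pos (by simp [parity_simps])]
    exact le_max_right _ _
  exact lt_of_lt_of_le h2 (h3.trans (hδgt (2 * n + 1)).le)

lemma club_inter {C D : Set Ordinal.{0}} (hC : IsClubIn C) (hD : IsClubIn D) :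
    IsClubIn (C ∩ D) := by
  obtain ⟨hC1, hC2, hC3⟩ := hC
  obtain ⟨hD1, hD2, hD3⟩ := hD
  refine ⟨fun γ hγ => hC1 hγ.1, ?_, ?_⟩
  · intro δ h1 h2 h3
    exact ⟨hC2 δ h1 h2 (fun β hβ => let ⟨γ, hγ, hh⟩ := h3 β hβ; ⟨γ, hγ.1, hh⟩),
           hD2 δ h1 h2 (fun β hβ => let ⟨γ, hγ, hh⟩ := h3 β hβ; ⟨γ, hγ.2, hh⟩)⟩
  · intro β hβ
    obtain ⟨δ, hδC, hδω, hβδ, hδlim, hδcl⟩ :=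
      exists_clpt hC1 hC2 hC3 (pick D) (fun γ hγ => (pick_club hD1 hD3 hγ).2.2) hβ
    refine ⟨δ, ⟨hδC, ?_⟩, hβδ⟩
    exact hD2 δ hδω hδlim (fun ρ hρ =>
      ⟨pick D ρ, (pick_club hD1 hD3 (lt_trans hρ hδω)).1,
        (pick_club hD1 hD3 (lt_trans hρ hδω)).2.1, hδcl ρ hρ⟩)

lemma club_Iio : IsClubIn (Set.Iio omega1) :=
  ⟨subset_rfl, fun δ h _ _ => h, fun β hβ => ⟨β + 1, succ_lt_omega1 hβ, ord_lt_add_one β⟩⟩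

noncomputable def cnt (K : Set ℕ) (n : ℕ) : ℝ :=
  (((Finset.range n).filter (fun k => k ∈ K)).card : ℝ)

def LD (a : ℝ) (K : Set ℕ) : Prop :=
  ∀ ε : ℝ, 0 < ε → ∀ᶠ n in Filter.atTop, (a - ε) * n ≤ cnt K n

lemma cnt_nonneg (K : Set ℕ) (n : ℕ) : 0 ≤ cnt K n := Nat.cast_nonneg _

lemma cnt_le_of_subset_union {K K' : Set ℕ} {m : ℕ}
    (h : ∀ k, k ∈ K → k ∈ K' ∨ k < m) (n : ℕ) : cnt K n ≤ cnt K' n + m := by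
  have hs : (Finset.range n).filter (fun k => k ∈ K) ⊆
      ((Finset.range n).filter (fun k => k ∈ K')) ∪ Finset.range m := by
    intro k hk
    simp only [Finset.mem_filter, Finset.mem_range, Finset.mem_union] at hk ⊢
    rcases h k hk.2 with h1 | h1
    · exact Or.inl ⟨hk.1, h1⟩
    · exact Or.inr h1
  have h1 := (Finset.card_le_card hs).trans (Finset.card_union_le _ _)
  rw [Finset.card_range] at h1
  unfold cnt
  exact_mod_cast h1

lemma LD_superset {a : ℝ} {K K' : Set ℕ} (hLD : LD a K)
    (h : ∃ m : ℕ, ∀ k, k ∈ K → k ∈ K' ∨ k < m) : LD a K' := by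
  obtain ⟨m, hm⟩ := h
  intro ε hε
  have h1 := hLD (ε / 2) (by linarith)
  have h2 : ∀ᶠ n : ℕ in Filter.atTop, (m : ℝ) ≤ ε / 2 * n := by
    have : Filter.Tendsto (fun n : ℕ => (ε / 2) * n) Filter.atTop Filter.atTop :=
      Filter.Tendsto.const_mul_atTop (by linarith) tendsto_natCast_atTop_atTop
    exact this.eventually_ge_atTop m
  filter_upwards [h1, h2] with n hn1 hn2
  have h3 := cnt_le_of_subset_union hm n
  have h4 : (a - ε) * n = (a - ε / 2) * n - ε / 2 * n := by ring
  linarith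

lemma LD_unbounded {a : ℝ} {K : Set ℕ} (ha : 0 < a) (hLD : LD a K) :
    ∀ m : ℕ, ∃ k, m ≤ k ∧ k ∈ K := by
  intro m
  by_contra hcon
  push_neg at hcon
  have hb : ∀ n, cnt K n ≤ m := by
    intro n
    have hs : (Finset.range n).filter (fun k => k ∈ K) ⊆ Finset.range m := by
      intro k hk
      simp only [Finset.mem_filter, Finset.mem_range] at hk ⊢
      by_contra hk2
      exact hcon k (by omega) hk.2
    have := (Finset.card_le_card hs).trans_eq (Finset.card_range m)
    unfold cnt
    exact_mod_cast this
  have h1 := hLD (a / 2) (by linarith)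
  have h2 : ∀ᶠ n : ℕ in Filter.atTop, (m : ℝ) < a / 2 * n := by
    have : Filter.Tendsto (fun n : ℕ => (a / 2) * n) Filter.atTop Filter.atTop :=
      Filter.Tendsto.const_mul_atTop (by linarith) tendsto_natCast_atTop_atTop
    exact this.eventually_gt_atTop m
  obtain ⟨n, hn1, hn2⟩ := (h1.and h2).exists
  have h3 := hb n
  have h4 : (a - a / 2) * n = a / 2 * n := by ring
  linarith

lemma hitRatio_nonneg (α : ℕ → Ordinal.{0}) (A : Set Ordinal.{0}) (n : ℕ) :
    0 ≤ hitRatio α A n := by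
  unfold hitRatio
  positivity

lemma LD_of_liminf {α : ℕ → Ordinal.{0}} {A : Set Ordinal.{0}} {a : ℝ}
    (h : a ≤ Filter.liminf (hitRatio α A) Filter.atTop) : LD a {k | α k ∈ A} := by
  intro ε hε
  have hb : Filter.IsBoundedUnder (· ≥ ·) Filter.atTop (hitRatio α A) :=
    Filter.isBoundedUnder_of ⟨0, fun n => hitRatio_nonneg α A n⟩
  have hev : ∀ᶠ n in Filter.atTop, a - ε < hitRatio α A n :=
    Filter.eventually_lt_of_lt_liminf (lt_of_lt_of_le (by linarith) h) hb
  filter_upwards [hev, Filter.eventually_ge_atTop 1] with n h1 h2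
  have hn : (0 : ℝ) < n := by
    have : (1 : ℝ) ≤ n := by exact_mod_cast h2
    linarith
  have heq : hitRatio α A n = cnt {k | α k ∈ A} n / n := rfl
  rw [heq] at h1
  exact ((lt_div_iff₀ hn).mp h1).le

lemma LD_pigeonhole {ι : Type*} {a : ℝ} (t : Finset ι) (K : ι → Set ℕ)
    (hLD : ∀ i ∈ t, LD a (K i))
    (hdisj : ∀ i ∈ t, ∀ j ∈ t, i ≠ j → ∀ k, k ∈ K i → k ∉ K j) :
    (t.card : ℝ) * a ≤ 1 := by
  by_contra hcon
  push_neg at hcon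
  have hc0 : t.card ≠ 0 := by
    rintro h
    rw [h] at hcon
    norm_num at hcon
  have hcard : (0 : ℝ) < t.card := by
    have : 0 < t.card := Nat.pos_of_ne_zero hc0
    exact_mod_cast this
  set c : ℝ := (t.card : ℝ) with hc
  set ε : ℝ := (c * a - 1) / (2 * c) with hεdef
  have hε : 0 < ε := div_pos (by linarith) (by linarith)
  have hcε : c * ε = (c * a - 1) / 2 := by
    rw [hεdef]
    field_simp
  have hkey : 1 < c * (a - ε) := by
    have : c * (a - ε) = c * a - c * ε := by ring
    rw [this, hcε]
    linarith
  have hev : ∀ᶠ n : ℕ in Filter.atTop, ∀ i ∈ t, (a - ε) * n ≤ cnt (K i) n :=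
    (Filter.eventually_all_finset t).mpr (fun i hi => hLD i hi ε hε)
  obtain ⟨n, hn, hn1⟩ := (hev.and (Filter.eventually_ge_atTop 1)).exists
  have hsum_le : (∑ i ∈ t, ((Finset.range n).filter (fun k => k ∈ K i)).card) ≤ n := by
    rw [← Finset.card_biUnion]
    · exact (Finset.card_le_card (Finset.biUnion_subset.mpr
        (fun i _ => Finset.filter_subset _ _))).trans_eq (Finset.card_range n)
    · intro i hi j hj hij
      rw [Function.onFun, Finset.disjoint_left]
      intro k hk1 hk2
      simp only [Finset.mem_filter] at hk1 hk2
      exact hdisj i hi j hj hij k hk1.2 hk2.2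
  have hsum_ge : c * ((a - ε) * n) ≤
      ((∑ i ∈ t, ((Finset.range n).filter (fun k => k ∈ K i)).card : ℕ) : ℝ) := by
    push_cast
    calc c * ((a - ε) * n) = ∑ _i ∈ t, (a - ε) * n := by
          rw [Finset.sum_const, _root_.nsmul_eq_mul]
      _ ≤ ∑ i ∈ t, (((Finset.range n).filter (fun k => k ∈ K i)).card : ℝ) :=
          Finset.sum_le_sum (fun i hi => hn i hi)
  have hnr : (1 : ℝ) ≤ n := by exact_mod_cast hn1
  have hlt : (n : ℝ) < c * ((a - ε) * n) := by nlinarith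
  have hle : ((∑ i ∈ t, ((Finset.range n).filter (fun k => k ∈ K i)).card : ℕ) : ℝ) ≤ n := by
    exact_mod_cast hsum_le
  linarith

def codeSet : Set (Set (ℕ × Ordinal.{0}) × Ordinal.{0}) :=
  {p | p.1.Countable ∧ p.1 ⊆ Set.univ ×ˢ Set.Iio omega1 ∧ p.2 < omega1}

lemma mk_Iio_omega1 : #(↥(Set.Iio omega1)) = Cardinal.aleph 1 := by
  rw [Ordinal.mk_Iio_ordinal]
  have h1 : omega1.card = Cardinal.aleph 1 := Cardinal.card_ord _
  rw [h1, Cardinal.lift_aleph, Ordinal.lift_one]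

lemma exists_coding.{u} (CH : (2 : Cardinal.{u}) ^ Cardinal.aleph0 = Cardinal.aleph 1) :
    ∃ x : Ordinal.{0} → Set (ℕ × Ordinal.{0}) × Ordinal.{0},
      ∀ u : Set (ℕ × Ordinal.{0}), ∀ η : Ordinal.{0}, u.Countable →
        u ⊆ Set.univ ×ˢ Set.Iio omega1 → η < omega1 →
        ∀ β₀ < omega1, ∃ β, β₀ < β ∧ β < omega1 ∧ x β = (u, η) := by
  classical
  have CH1 : (2 : Cardinal.{1}) ^ (ℵ₀ : Cardinal.{1}) = Cardinal.aleph 1 := by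
    have h : Cardinal.lift.{1, u} ((2 : Cardinal.{u}) ^ (ℵ₀ : Cardinal.{u})) =
        Cardinal.lift.{1, u} (Cardinal.aleph 1) := by rw [CH]
    rw [Cardinal.lift_power, Cardinal.lift_aleph0, Cardinal.lift_two,
      Cardinal.lift_aleph] at h
    apply Cardinal.lift_injective.{u, 1}
    rw [Cardinal.lift_power, Cardinal.lift_aleph0, Cardinal.lift_two, Cardinal.lift_aleph]
    rw [Ordinal.lift_one] at h ⊢
    exact h
  have hple : (Cardinal.aleph 1 : Cardinal.{1}) ^ (ℵ₀ : Cardinal.{1}) = Cardinal.aleph 1 := by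
    rw [← CH1, ← Cardinal.power_mul, Cardinal.aleph0_mul_aleph0]
  have ha1 : (ℵ₀ : Cardinal.{1}) ≤ Cardinal.aleph 1 := Cardinal.aleph0_le_aleph 1
  -- the decoding surjection
  set dec : (ℕ → Option (ℕ × ↥(Set.Iio omega1))) → Set (ℕ × Ordinal.{0}) :=
    fun f => (fun i : ℕ × ↥(Set.Iio omega1) => ((i.1 : ℕ), (i.2 : Ordinal.{0}))) ''
      {i | ∃ n, f n = some i} with hdec
  have hdec_cnt : ∀ f, (dec f).Countable := by
    intro f
    apply Set.Countable.image
    have h1 : {i | ∃ n, f n = some i} = ⋃ n : ℕ, {i | f n = some i} := by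
      ext i; simp
    rw [h1]
    refine Set.countable_iUnion (fun n => Set.Subsingleton.countable ?_)
    intro i hi j hj
    simp only [Set.mem_setOf_eq] at hi hj
    rw [hi] at hj
    exact Option.some_injective _ hj
  have hdec_sub : ∀ f, dec f ⊆ Set.univ ×ˢ Set.Iio omega1 := by
    rintro f p ⟨i, _, rfl⟩
    exact ⟨Set.mem_univ _, i.2.2⟩
  have hsurj : ∀ p ∈ codeSet, ∃ w : (ℕ → Option (ℕ × ↥(Set.Iio omega1))) × ↥(Set.Iio omega1),
      ((dec w.1, ((w.2 : Ordinal.{0}))) : Set (ℕ × Ordinal.{0}) × Ordinal.{0}) = p := by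
    rintro ⟨u, η⟩ ⟨hcnt, hsub, hη⟩
    rcases u.eq_empty_or_nonempty with rfl | hne
    · refine ⟨(fun _ => none, ⟨η, hη⟩), ?_⟩
      have hde : dec (fun _ => (none : Option (ℕ × ↥(Set.Iio omega1)))) = ∅ := by
        rw [hdec]
        ext pp
        simp
      rw [hde]
    · set m : ℕ × ↥(Set.Iio omega1) → ℕ × Ordinal.{0} := fun i => (i.1, (i.2 : Ordinal.{0})) with hm
      have hminj : Function.Injective m := by
        rintro ⟨a, b⟩ ⟨c, d⟩ hcd
        simp only [hm, Prod.mk.injEq] at hcd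
        exact Prod.ext hcd.1 (Subtype.ext hcd.2)
      have hsub' : u ⊆ Set.range m := by
        rintro ⟨n, ξ⟩ hp
        exact ⟨(n, ⟨ξ, (hsub hp).2⟩), rfl⟩
      have hu' : (m ⁻¹' u).Countable := hcnt.preimage hminj
      have hne' : (m ⁻¹' u).Nonempty := by
        obtain ⟨p, hp⟩ := hne
        obtain ⟨i, rfl⟩ := hsub' hp
        exact ⟨i, hp⟩
      obtain ⟨g, hg⟩ := hu'.exists_eq_range hne'
      refine ⟨(fun n => some (g n), ⟨η, hη⟩), ?_⟩
      refine Prod.ext ?_ rfl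
      have h1 : {i : ℕ × ↥(Set.Iio omega1) | ∃ n : ℕ, some (g n) = some i} = Set.range g := by
        ext i
        simp only [Set.mem_setOf_eq, Set.mem_range, Option.some.injEq]
      rw [hdec]
      show m '' {i | ∃ n, some (g n) = some i} = u
      rw [h1, ← hg, Set.image_preimage_eq_of_subset hsub']
  -- cardinality bound
  have hOption : #(Option (ℕ × ↥(Set.Iio omega1))) ≤ Cardinal.aleph 1 := by
    rw [Cardinal.mk_option, Cardinal.mk_prod, Cardinal.mk_nat, Cardinal.lift_aleph0,
      Cardinal.lift_id', mk_Iio_omega1, Cardinal.mul_eq_max le_rfl ha1,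
      max_eq_right ha1, Cardinal.add_one_eq ha1]
  have harrow : #(ℕ → Option (ℕ × ↥(Set.Iio omega1))) ≤ Cardinal.aleph 1 := by
    rw [Cardinal.mk_arrow, Cardinal.mk_nat, Cardinal.lift_aleph0]
    calc Cardinal.lift.{0,1} #(Option (ℕ × ↥(Set.Iio omega1))) ^ (ℵ₀ : Cardinal.{1})
        ≤ (Cardinal.aleph 1) ^ (ℵ₀ : Cardinal.{1}) := by
          apply Cardinal.power_le_power_right
          rw [Cardinal.lift_id']
          exact hOption
      _ = Cardinal.aleph 1 := hple
  have hcode_le : #(↥codeSet) ≤ Cardinal.aleph 1 := by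
    have hΦ : Function.Surjective (fun w : (ℕ → Option (ℕ × ↥(Set.Iio omega1))) × ↥(Set.Iio omega1) =>
        (⟨(dec w.1, (w.2 : Ordinal.{0})), hdec_cnt w.1, hdec_sub w.1, w.2.2⟩ : ↥codeSet)) := by
      rintro ⟨p, hp⟩
      obtain ⟨w, hw⟩ := hsurj p hp
      exact ⟨w, Subtype.ext hw⟩
    calc #(↥codeSet) ≤ #((ℕ → Option (ℕ × ↥(Set.Iio omega1))) × ↥(Set.Iio omega1)) :=
          Cardinal.mk_le_of_surjective hΦ
      _ ≤ Cardinal.aleph 1 := by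
          rw [Cardinal.mk_prod]
          simp only [Cardinal.lift_id]
          rw [mk_Iio_omega1]
          calc #(ℕ → Option (ℕ × ↥(Set.Iio omega1))) * Cardinal.aleph 1
              ≤ Cardinal.aleph 1 * Cardinal.aleph 1 :=
                mul_le_mul' harrow le_rfl
            _ = Cardinal.aleph 1 := Cardinal.mul_eq_self ha1
  have hIcode : #(↥codeSet) ≤ #(↥(Set.Iio omega1)) := by rw [mk_Iio_omega1]; exact hcode_le
  obtain ⟨emb⟩ := (Cardinal.le_def _ _).mp hIcode
  have hP0 : ((∅ : Set (ℕ × Ordinal.{0})), (0 : Ordinal.{0})) ∈ codeSet :=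
    ⟨Set.countable_empty, Set.empty_subset _, zero_lt_omega1⟩
  set ψ : ↥(Set.Iio omega1) → ↥codeSet := fun q =>
    if h : ∃ p, emb p = q then h.choose else ⟨_, hP0⟩ with hψdef
  have hψ : ∀ p, ψ (emb p) = p := by
    intro p
    have hex : ∃ p', emb p' = emb p := ⟨p, rfl⟩
    have h1 : ψ (emb p) = hex.choose := dif_pos hex
    rw [h1]
    exact emb.injective hex.choose_spec
  have hprod : #(↥(Set.Iio omega1) × ↥(Set.Iio omega1)) = #(↥(Set.Iio omega1)) := by
    rw [Cardinal.mk_prod]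
    simp only [Cardinal.lift_id]
    rw [mk_Iio_omega1, Cardinal.mul_eq_self ha1]
  obtain ⟨π⟩ := Cardinal.eq.mp hprod
  refine ⟨fun β => if h : β < omega1 then
      ((ψ (π.symm ⟨β, h⟩).2 : ↥codeSet) : Set (ℕ × Ordinal.{0}) × Ordinal.{0})
    else (∅, 0), ?_⟩
  intro u η hcnt hsub hη β₀ hβ₀
  set p : ↥codeSet := ⟨(u, η), hcnt, hsub, hη⟩ with hpdef
  set q := emb p with hqdef
  set Sf : Set Ordinal.{0} := {β | ∃ h : β < omega1, (π.symm ⟨β, h⟩).2 = q} with hSf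
  have hSfsub : Sf ⊆ Set.Iio omega1 := by
    rintro β ⟨h, _⟩
    exact h
  have hSfunc : ¬ Sf.Countable := by
    intro hcnt2
    set j : ↥(Set.Iio omega1) → Ordinal.{0} := fun y => ((π (y, q)) : Ordinal.{0}) with hj
    have hjmem : ∀ y, j y ∈ Sf := by
      intro y
      refine ⟨(π (y, q)).2, ?_⟩
      have h2 : (⟨((π (y, q)) : Ordinal.{0}), (π (y, q)).2⟩ : ↥(Set.Iio omega1)) = π (y, q) :=
        Subtype.ext rfl
      rw [h2, Equiv.symm_apply_apply]
    have hjinj : Function.Injective j := by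
      intro y1 y2 hy
      have h3 : π (y1, q) = π (y2, q) := Subtype.ext hy
      have h4 := π.injective h3
      exact (Prod.ext_iff.mp h4).1
    have h5 : (Set.range j).Countable := hcnt2.mono (Set.range_subset_iff.mpr hjmem)
    have h6 : (j ⁻¹' (Set.range j)).Countable := h5.preimage hjinj
    rw [Set.preimage_range] at h6
    have h7 : Countable ↥(Set.Iio omega1) := Set.countable_univ_iff.mp h6
    have h8 : #(↥(Set.Iio omega1)) ≤ ℵ₀ := Cardinal.mk_le_aleph0_iff.mpr h7
    rw [mk_Iio_omega1] at h8
    exact absurd h8 (not_le.mpr Cardinal.aleph0_lt_aleph_one)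
  obtain ⟨β, hβSf, hβgt⟩ := unbounded_of_uncountable hSfsub hSfunc β₀ hβ₀
  refine ⟨β, hβgt, hSfsub hβSf, ?_⟩
  obtain ⟨hβω, hq2⟩ := hβSf
  have h1 : (fun β => if h : β < omega1 then
      ((ψ (π.symm ⟨β, h⟩).2 : ↥codeSet) : Set (ℕ × Ordinal.{0}) × Ordinal.{0})
    else (∅, 0)) β = ((ψ (π.symm ⟨β, hβω⟩).2 : ↥codeSet) : Set (ℕ × Ordinal.{0}) × Ordinal.{0}) :=
    dif_pos hβω
  rw [h1, hq2, hψ p]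

lemma club_fold (Cs : ℕ → Set Ordinal.{0}) (hCs : ∀ m, IsClubIn (Cs m)) :
    ∀ n, IsClubIn (⋂ m ∈ Finset.range (n + 1), Cs m) := by
  intro n
  induction n with
  | zero => simpa using hCs 0
  | succ n ih =>
    have h1 : (⋂ m ∈ Finset.range (n + 1 + 1), Cs m) =
        Cs (n + 1) ∩ ⋂ m ∈ Finset.range (n + 1), Cs m := by
      rw [Finset.range_add_one, Finset.set_biInter_insert]
    rw [h1]
    exact club_inter (hCs (n + 1)) ih

lemma finite_enum {X : Type*} {s : Set X} (hfin : s.Finite) {N : ℕ} (hcard : s.ncard ≤ N)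
    (x0 : X) : ∃ e : Fin (N + 1) → X, ∀ y ∈ s, ∃ m, e m = y := by
  classical
  set l := hfin.toFinset.toList with hl
  refine ⟨fun i => l.getD i x0, ?_⟩
  intro y hy
  have hyl : y ∈ l := by
    rw [hl, Finset.mem_toList, Set.Finite.mem_toFinset]
    exact hy
  have hlen : l.length ≤ N := by
    rw [hl, Finset.length_toList, ← Set.ncard_eq_toFinset_card s hfin]
    exact hcard
  have hidx : l.idxOf y < l.length := List.idxOf_lt_length_iff.mpr hyl
  refine ⟨⟨l.idxOf y, by omega⟩, ?_⟩
  simp only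
  rw [List.getD_eq_getElem l x0 (by exact hidx)]
  exact List.getElem_idxOf hidx

lemma cand_finite {a : ℝ} {N : ℕ} (hNa : (1 : ℝ) < (N + 1) * a)
    {δ : Ordinal.{0}} (hδ : Order.IsSuccLimit δ)
    (u : ℕ → Set (ℕ × Ordinal.{0})) (e : ℕ → Ordinal.{0}) :
    ∃ en : Fin (N + 1) → Set (ℕ × Ordinal.{0}),
      ∀ Y ∈ {Y : Set (ℕ × Ordinal.{0}) | Y ⊆ Set.univ ×ˢ Set.Iio δ ∧
        ∀ γ < δ, LD a {k | u k = Y ∩ Set.univ ×ˢ Set.Iio (e k) ∧ γ < e k}},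
      ∃ m, en m = Y := by
  classical
  set S : Set (Set (ℕ × Ordinal.{0})) := {Y : Set (ℕ × Ordinal.{0}) |
    Y ⊆ Set.univ ×ˢ Set.Iio δ ∧
    ∀ γ < δ, LD a {k | u k = Y ∩ Set.univ ×ˢ Set.Iio (e k) ∧ γ < e k}} with hS
  have hdvg : ∀ Y ∈ S, ∀ Y' ∈ S, Y ≠ Y' → ∃ ξ, ξ < δ ∧
      ∀ η, ξ < η → Y ∩ Set.univ ×ˢ Set.Iio η ≠ Y' ∩ Set.univ ×ˢ Set.Iio η := by
    intro Y hY Y' hY' hne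
    have hsd : ∃ p, (p ∈ Y ∧ p ∉ Y') ∨ (p ∈ Y' ∧ p ∉ Y) := by
      by_contra hc
      push_neg at hc
      apply hne
      ext p
      have := hc p
      tauto
    obtain ⟨p, hp⟩ := hsd
    have hpδ : p.2 < δ := by
      rcases hp with ⟨h1, _⟩ | ⟨h1, _⟩
      · exact (hY.1 h1).2
      · exact (hY'.1 h1).2
    refine ⟨p.2, hpδ, ?_⟩
    intro η hη heq
    rcases hp with ⟨h1, h2⟩ | ⟨h1, h2⟩
    · apply h2
      have hpin : p ∈ Y ∩ Set.univ ×ˢ Set.Iio η := ⟨h1, Set.mem_univ _, hη⟩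
      rw [heq] at hpin
      exact hpin.1
    · apply h2
      have hpin : p ∈ Y' ∩ Set.univ ×ˢ Set.Iio η := ⟨h1, Set.mem_univ _, hη⟩
      rw [← heq] at hpin
      exact hpin.1
  set dv : Set (ℕ × Ordinal.{0}) → Set (ℕ × Ordinal.{0}) → Ordinal.{0} := fun Y Y' =>
    if h : ∃ ξ, ξ < δ ∧ ∀ η, ξ < η →
        Y ∩ Set.univ ×ˢ Set.Iio η ≠ Y' ∩ Set.univ ×ˢ Set.Iio η then h.choose else 0
    with hdv
  have hdv_spec : ∀ Y ∈ S, ∀ Y' ∈ S, Y ≠ Y' → dv Y Y' < δ ∧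
      ∀ η, dv Y Y' < η → Y ∩ Set.univ ×ˢ Set.Iio η ≠ Y' ∩ Set.univ ×ˢ Set.Iio η := by
    intro Y hY Y' hY' hne
    have hex := hdvg Y hY Y' hY' hne
    have h1 : dv Y Y' = hex.choose := dif_pos hex
    rw [h1]
    exact hex.choose_spec
  have hdv_lt : ∀ Y Y', dv Y Y' < δ := by
    intro Y Y'
    by_cases h : ∃ ξ, ξ < δ ∧ ∀ η, ξ < η →
        Y ∩ Set.univ ×ˢ Set.Iio η ≠ Y' ∩ Set.univ ×ˢ Set.Iio η
    · have h1 : dv Y Y' = h.choose := dif_pos h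
      rw [h1]; exact h.choose_spec.1
    · have h1 : dv Y Y' = 0 := dif_neg h
      rw [h1]; exact hδ.pos
  have hbound : ∀ t : Finset (Set (ℕ × Ordinal.{0})), ↑t ⊆ S → t.card ≤ N := by
    intro t ht
    by_contra hcon
    push_neg at hcon
    obtain ⟨t', ht't, ht'card⟩ := Finset.exists_subset_card_eq (by omega : N + 1 ≤ t.card)
    have ht'S : ↑t' ⊆ S := fun Y hY => ht (ht't hY)
    set γs : Ordinal.{0} := t'.sup (fun Y => t'.sup (fun Y' => dv Y Y')) with hγs
    have hγsδ : γs < δ := by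
      rw [hγs, Finset.sup_lt_iff hδ.pos]
      intro Y _
      rw [Finset.sup_lt_iff hδ.pos]
      intro Y' _
      exact hdv_lt Y Y'
    have hγs_ge : ∀ Y ∈ t', ∀ Y' ∈ t', dv Y Y' ≤ γs := by
      intro Y hY Y' hY'
      exact le_trans (Finset.le_sup (f := fun Y' => dv Y Y') hY') (Finset.le_sup (f := fun Y => t'.sup (fun Y' => dv Y Y')) hY)
    set K : Set (ℕ × Ordinal.{0}) → Set ℕ := fun Y =>
      {k | u k = Y ∩ Set.univ ×ˢ Set.Iio (e k) ∧ γs < e k} with hK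
    have hLD : ∀ Y ∈ t', LD a (K Y) := by
      intro Y hY
      exact (ht'S hY).2 γs hγsδ
    have hdisj : ∀ Y ∈ t', ∀ Y' ∈ t', Y ≠ Y' → ∀ k, k ∈ K Y → k ∉ K Y' := by
      intro Y hY Y' hY' hne k hk1 hk2
      have h1 := hk1.1
      have h2 := hk2.1
      have h3 : Y ∩ Set.univ ×ˢ Set.Iio (e k) = Y' ∩ Set.univ ×ˢ Set.Iio (e k) := by
        rw [← h1, ← h2]
      exact (hdv_spec Y (ht'S hY) Y' (ht'S hY') hne).2 (e k)
        (lt_of_le_of_lt (hγs_ge Y hY Y' hY') hk1.2) h3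
    have hpig := LD_pigeonhole t' K hLD hdisj
    rw [ht'card] at hpig
    push_cast at hpig
    linarith
  have hfin : S.Finite := by
    by_contra hinf
    have hinf2 : S.Infinite := hinf
    obtain ⟨t, htS, htcard⟩ := hinf2.exists_subset_card_eq (N + 1)
    have := hbound t htS
    omega
  have hncard : S.ncard ≤ N := by
    have h1 : ↑hfin.toFinset ⊆ S := by
      intro Y hY
      rw [Finset.mem_coe] at hY
      rwa [hfin.mem_toFinset] at hY
    have h2 := hbound hfin.toFinset h1
    rwa [Set.ncard_eq_toFinset_card S hfin]
  exact finite_enum hfin hncard ∅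

end CSID

/-- Assume CH. Then for every `a ∈ (0,1]`, `♣^{inf ≥ a}` implies `◊`. -/
theorem clubSuitInf_implies_diamond
    (CH : (2 : Cardinal) ^ Cardinal.aleph0 = Cardinal.aleph 1)
    (a : ℝ) (ha0 : 0 < a) (ha1 : a ≤ 1)
    (h : ClubSuitInf limOmega1 a) : DiamondOmega1 := by
  classical
  obtain ⟨α, hGood, hGuess⟩ := h
  obtain ⟨x, hx⟩ := CSID.exists_coding CH
  set cand : Ordinal.{0} → Set (Set (ℕ × Ordinal.{0})) := fun δ =>
    {Y | Y ⊆ Set.univ ×ˢ Set.Iio δ ∧ ∀ γ < δ, CSID.LD a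
      {k | (x (α δ k)).1 = Y ∩ Set.univ ×ˢ Set.Iio (x (α δ k)).2 ∧ γ < (x (α δ k)).2}}
    with hcand
  -- Step A : every subset of ℕ × ω₁ is guessed by `cand` at club-many limit points
  have key : ∀ B : Set (ℕ × Ordinal.{0}), B ⊆ Set.univ ×ˢ Set.Iio omega1 →
      ∀ C, IsClubIn C → ∃ δ, δ ∈ limOmega1 ∧ δ ∈ C ∧
        (B ∩ Set.univ ×ˢ Set.Iio δ) ∈ cand δ := by
    intro B hB C hC
    have hFex : ∀ γ, γ < omega1 → ∃ β, γ < β ∧ β < omega1 ∧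
        x β = (B ∩ Set.univ ×ˢ Set.Iio γ, γ) := by
      intro γ hγ
      have hcnt : (B ∩ Set.univ ×ˢ Set.Iio γ).Countable :=
        (Set.Countable.prod Set.countable_univ (CSID.countable_Iio hγ)).mono
          Set.inter_subset_right
      have hsubB : B ∩ Set.univ ×ˢ Set.Iio γ ⊆ Set.univ ×ˢ Set.Iio omega1 :=
        fun p hp => hB hp.1
      exact hx _ γ hcnt hsubB hγ γ hγ
    set F : Ordinal.{0} → Ordinal.{0} := fun γ =>
      if h : γ < omega1 then (hFex γ h).choose else 0 with hFdef
    have hFspec : ∀ γ, ∀ hγ : γ < omega1, γ < F γ ∧ F γ < omega1 ∧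
        x (F γ) = (B ∩ Set.univ ×ˢ Set.Iio γ, γ) := by
      intro γ hγ
      have h1 : F γ = (hFex γ hγ).choose := dif_pos hγ
      rw [h1]
      exact (hFex γ hγ).choose_spec
    have hFlt : ∀ γ < omega1, F γ < omega1 := fun γ hγ => (hFspec γ hγ).2.1
    set dom : Set Ordinal.{0} := {δ' | δ' ∈ C ∧ δ' < omega1 ∧ ∀ γ < δ', F γ < δ'} with hdom
    have hdom_unb : ∀ β < omega1, ∃ δ' ∈ dom, β < δ' := by
      intro β hβ
      obtain ⟨δ', h1, h2, h3, _, h5⟩ := CSID.exists_clpt hC.1 hC.2.1 hC.2.2 F hFlt hβ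
      exact ⟨δ', ⟨h1, h2, h5⟩, h3⟩
    set E : Set Ordinal.{0} := F '' dom with hE
    have hEsub : E ⊆ Set.Iio omega1 := by
      rintro β ⟨δ', hδ', rfl⟩
      exact (hFspec δ' hδ'.2.1).2.1
    have hEunc : ¬ E.Countable := by
      intro hcnt
      have hrec : dom ⊆ (fun β => (x β).2) '' E := by
        intro δ' hδ'
        refine ⟨F δ', ⟨δ', hδ', rfl⟩, ?_⟩
        show (x (F δ')).2 = δ'
        rw [(hFspec δ' hδ'.2.1).2.2]
      have hdc : dom.Countable := (hcnt.image _).mono hrec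
      obtain ⟨β, hβ, hbnd⟩ := CSID.bounded_of_countable (fun δ' hδ' => hδ'.2.1) hdc
      obtain ⟨δ', hδ'dom, hβδ'⟩ := hdom_unb β hβ
      exact absurd (hbnd δ' hδ'dom) (not_lt.mpr hβδ'.le)
    obtain ⟨δ, hδlim, hδinf⟩ := hGuess E hEsub hEunc
    obtain ⟨hαmono, hαlt, hαcof⟩ := hGood δ hδlim
    have hLDhits : CSID.LD a {k | α δ k ∈ E} := CSID.LD_of_liminf hδinf
    have hhits_unb := CSID.LD_unbounded ha0 hLDhits
    have hEcof : ∀ ρ < δ, ∃ β ∈ E, ρ < β ∧ β < δ := by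
      intro ρ hρ
      obtain ⟨n, hn⟩ := hαcof ρ hρ
      obtain ⟨k, hk1, hk2⟩ := hhits_unb n
      exact ⟨α δ k, hk2, lt_of_lt_of_le hn (hαmono.monotone hk1), hαlt k⟩
    have hdomcof : ∀ ρ < δ, ∃ δ' ∈ dom, ρ < δ' ∧ δ' < δ := by
      intro ρ hρ
      obtain ⟨β₁, ⟨δ'₁, hδ'₁, rfl⟩, hρβ₁, hβ₁δ⟩ := hEcof ρ hρ
      obtain ⟨β₂, ⟨δ'₂, hδ'₂, rfl⟩, hβ₁β₂, hβ₂δ⟩ := hEcof (F δ'₁) hβ₁δ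
      have h12 : δ'₁ < δ'₂ := by
        rcases lt_trichotomy δ'₁ δ'₂ with h | h | h
        · exact h
        · rw [h] at hβ₁β₂
          exact absurd hβ₁β₂ (lt_irrefl _)
        · have h1 : F δ'₂ < δ'₁ := hδ'₁.2.2 δ'₂ h
          have h2 : δ'₁ < F δ'₁ := (hFspec δ'₁ hδ'₁.2.1).1
          exact absurd (lt_trans (lt_trans h1 h2) hβ₁β₂) (lt_irrefl _)
      refine ⟨δ'₂, hδ'₂, ?_, lt_trans (hFspec δ'₂ hδ'₂.2.1).1 hβ₂δ⟩
      by_contra hcon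
      push_neg at hcon
      have h1 : F δ'₁ < δ'₂ := hδ'₂.2.2 δ'₁ h12
      exact absurd (lt_of_lt_of_le h1 hcon) (not_lt.mpr hρβ₁.le)
    have hδC : δ ∈ C := hC.2.1 δ hδlim.1 hδlim.2 (fun ρ hρ =>
      let ⟨δ', hδ', h1, h2⟩ := hdomcof ρ hρ; ⟨δ', hδ'.1, h1, h2⟩)
    refine ⟨δ, hδlim, hδC, Set.inter_subset_right, ?_⟩
    intro γ hγ
    obtain ⟨δ'₀, hδ'₀, hγδ'₀, hδ'₀δ⟩ := hdomcof γ hγ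
    obtain ⟨n₀, hn₀⟩ := hαcof δ'₀ hδ'₀δ
    apply CSID.LD_superset hLDhits
    refine ⟨n₀, ?_⟩
    intro k hk
    by_cases hkn : k < n₀
    · exact Or.inr hkn
    left
    obtain ⟨δ'', hδ'', hFeq⟩ := hk
    have hδ''ω : δ'' < omega1 := hδ''.2.1
    have hxval : x (α δ k) = (B ∩ Set.univ ×ˢ Set.Iio δ'', δ'') := by
      rw [← hFeq]
      exact (hFspec δ'' hδ''ω).2.2
    have hαk : δ'₀ < α δ k := lt_of_lt_of_le hn₀ (hαmono.monotone (not_lt.mp hkn))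
    have hδ''γ : γ < δ'' := by
      by_contra hcon
      push_neg at hcon
      have h1 : δ'' < δ'₀ := lt_of_le_of_lt hcon hγδ'₀
      have h2 : F δ'' < δ'₀ := hδ'₀.2.2 δ'' h1
      rw [hFeq] at h2
      exact absurd (lt_trans h2 hαk) (lt_irrefl _)
    have hδ''δ : δ'' < δ := by
      have h1 : δ'' < F δ'' := (hFspec δ'' hδ''ω).1
      rw [hFeq] at h1
      exact lt_trans h1 (hαlt k)
    simp only [Set.mem_setOf_eq, hxval]
    refine ⟨?_, hδ''γ⟩
    ext p
    simp only [Set.mem_inter_iff, Set.mem_prod, Set.mem_univ, true_and, Set.mem_Iio]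
    constructor
    · rintro ⟨hpB, hp2⟩
      exact ⟨⟨hpB, lt_trans hp2 hδ''δ⟩, hp2⟩
    · rintro ⟨⟨hpB, _⟩, hp2⟩
      exact ⟨hpB, hp2⟩
  -- the number of guesses
  set N : ℕ := ⌈a⁻¹⌉₊ with hN
  have hNa : (1 : ℝ) < ((N : ℝ) + 1) * a := by
    have h1 : a⁻¹ ≤ (N : ℝ) := Nat.le_ceil a⁻¹
    have h2 : a⁻¹ * a = 1 := inv_mul_cancel₀ (ne_of_gt ha0)
    nlinarith
  have candFin : ∀ δ, Order.IsSuccLimit δ → ∃ e : Fin (N + 1) → Set (ℕ × Ordinal.{0}),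
      ∀ Y ∈ cand δ, ∃ m, e m = Y := by
    intro δ hδlim
    obtain ⟨en, hen⟩ := CSID.cand_finite hNa hδlim
      (fun k => (x (α δ k)).1) (fun k => (x (α δ k)).2)
    exact ⟨en, fun Y hY => hen Y hY⟩
  set enum : Ordinal.{0} → Fin (N + 1) → Set (ℕ × Ordinal.{0}) := fun δ =>
    if h : Order.IsSuccLimit δ then (candFin δ h).choose else fun _ => ∅ with henum
  have henum_spec : ∀ δ, ∀ h : Order.IsSuccLimit δ, ∀ Y ∈ cand δ, ∃ m, enum δ m = Y := by
    intro δ hδ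
    have h1 : enum δ = (candFin δ hδ).choose := dif_pos hδ
    rw [h1]
    exact (candFin δ hδ).choose_spec
  set Bseq : Fin (N + 1) → Ordinal.{0} → Set Ordinal.{0} := fun m δ =>
    {ξ | ξ < δ ∧ ((m : ℕ), ξ) ∈ enum δ m} with hBseqdef
  by_contra hcon
  rw [DiamondOmega1] at hcon
  push_neg at hcon
  have hfail : ∀ m : Fin (N + 1), ∃ A : Set Ordinal.{0}, A ⊆ Set.Iio omega1 ∧
      ∃ C, IsClubIn C ∧
        ∀ δ, δ ∈ limOmega1 → A ∩ Set.Iio δ = Bseq m δ → δ ∉ C := by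
    intro m
    obtain ⟨A, hA, hstat⟩ := hcon (Bseq m) (fun δ hδ ξ hξ => hξ.1)
    rw [IsStatIn] at hstat
    push_neg at hstat
    have hsub : {δ ∈ limOmega1 | A ∩ Set.Iio δ = Bseq m δ} ⊆ Set.Iio omega1 :=
      fun δ hδ => hδ.1.1
    obtain ⟨C, hCclub, hCne⟩ := hstat hsub
    refine ⟨A, hA, C, hCclub, ?_⟩
    intro δ h1 h2 h3
    have hδmem : δ ∈ ({δ ∈ limOmega1 | A ∩ Set.Iio δ = Bseq m δ} ∩ C) := ⟨⟨h1, h2⟩, h3⟩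
    rw [hCne] at hδmem
    exact hδmem
  choose A hA C hCclub hAvoid using hfail
  set Cs : ℕ → Set Ordinal.{0} := fun j =>
    if h : j < N + 1 then C ⟨j, h⟩ else Set.Iio omega1 with hCs
  have hCsclub : ∀ j, IsClubIn (Cs j) := by
    intro j
    by_cases h : j < N + 1
    · have h1 : Cs j = C ⟨j, h⟩ := dif_pos h
      rw [h1]; exact hCclub _
    · have h1 : Cs j = Set.Iio omega1 := dif_neg h
      rw [h1]; exact CSID.club_Iio
  set Dfull : Set Ordinal.{0} := ⋂ m ∈ Finset.range (N + 1), Cs m with hDfull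
  have hDclub : IsClubIn Dfull := CSID.club_fold Cs hCsclub N
  set B : Set (ℕ × Ordinal.{0}) := {p | ∃ hm : p.1 < N + 1, p.2 ∈ A ⟨p.1, hm⟩} with hBdef
  have hBsub : B ⊆ Set.univ ×ˢ Set.Iio omega1 := by
    rintro ⟨n, ξ⟩ ⟨hm, hξ⟩
    exact ⟨trivial, hA _ hξ⟩
  obtain ⟨δ, hδlim, hδD, hδcand⟩ := key B hBsub Dfull hDclub
  obtain ⟨m₀, hm₀⟩ := henum_spec δ hδlim.2 _ hδcand
  have hBseqeq : A m₀ ∩ Set.Iio δ = Bseq m₀ δ := by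
    ext ξ
    simp only [hBseqdef, Set.mem_inter_iff, Set.mem_Iio, Set.mem_setOf_eq]
    constructor
    · rintro ⟨hξA, hξδ⟩
      refine ⟨hξδ, ?_⟩
      rw [hm₀]
      refine ⟨⟨m₀.isLt, ?_⟩, trivial, hξδ⟩
      have hfe : (⟨(m₀ : ℕ), m₀.isLt⟩ : Fin (N + 1)) = m₀ := Fin.eta m₀ m₀.isLt
      rw [hfe]
      exact hξA
    · rintro ⟨hξδ, hmem⟩
      rw [hm₀] at hmem
      obtain ⟨⟨hm, hξA⟩, -⟩ := hmem
      refine ⟨?_, hξδ⟩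
      have hfe : (⟨(m₀ : ℕ), hm⟩ : Fin (N + 1)) = m₀ := Fin.eta m₀ hm
      rw [hfe] at hξA
      exact hξA
  have hδCm₀ : δ ∈ C m₀ := by
    have h1 : δ ∈ Cs (m₀ : ℕ) := by
      have := Set.mem_iInter₂.mp hδD (m₀ : ℕ) (Finset.mem_range.mpr m₀.isLt)
      exact this
    have h2 : Cs (m₀ : ℕ) = C ⟨(m₀ : ℕ), m₀.isLt⟩ := dif_pos m₀.isLt
    rw [h2, Fin.eta m₀ m₀.isLt] at h1
    exact h1
  exact hAvoid m₀ δ hδlim hBseqeq hδCm₀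
end

section
/- Assume the Continuum Hypothesis. Then for every real number a with 0 < a ≤ 1, the principle ♣^{inf≥a} is equivalent to the diamond principle ◊. -/
open Filter Set

-- ### Part 0
theorem lt_omega1_iff {o : Ordinal.{0}} : o < omega1 ↔ o.card < Cardinal.aleph 1 :=
  Cardinal.lt_ord

theorem card_lt_of_lt_omega1 {o : Ordinal.{0}} (h : o < omega1) :
    o.card ≤ Cardinal.aleph0 := by
  have := lt_omega1_iff.1 h
  rwa [← Cardinal.succ_aleph0, Order.lt_succ_iff] at this

theorem lt_omega1_of_card_le {o : Ordinal.{0}} (h : o.card ≤ Cardinal.aleph0) :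
    o < omega1 := by
  rw [lt_omega1_iff, ← Cardinal.succ_aleph0]
  exact Order.lt_succ_of_le h

theorem omega0_lt_omega1 : Ordinal.omega0 < omega1 := by
  apply lt_omega1_of_card_le
  simp [Ordinal.card_omega0]

theorem succ_lt_omega1 {o : Ordinal.{0}} (h : o < omega1) : o + 1 < omega1 := by
  apply lt_omega1_of_card_le
  rw [Ordinal.card_add]
  have := card_lt_of_lt_omega1 h
  simp only [Ordinal.card_one]
  calc o.card + 1 ≤ Cardinal.aleph0 + Cardinal.aleph0 := by
        exact add_le_add this (Cardinal.one_le_aleph0)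
    _ = Cardinal.aleph0 := Cardinal.aleph0_add_aleph0

theorem countable_Iio_of_lt_omega1 {o : Ordinal.{0}} (h : o < omega1) :
    (Set.Iio o).Countable := by
  rw [Cardinal.countable_iff_lt_aleph_one, Ordinal.mk_Iio_ordinal]
  have : Cardinal.lift.{1} o.card < Cardinal.lift.{1} (Cardinal.aleph 1) :=
    Cardinal.lift_strictMono (lt_omega1_iff.1 h)
  rwa [Cardinal.lift_aleph, Ordinal.lift_one] at this

/-- An uncountable subset of `Iio ω₁` is unbounded in `ω₁`. -/
theorem unbounded_of_uncountable {A : Set Ordinal.{0}} (hA : A ⊆ Set.Iio omega1)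
    (hunc : ¬ A.Countable) : ∀ β < omega1, ∃ γ ∈ A, β < γ := by
  intro β hβ
  by_contra hc
  push_neg at hc
  apply hunc
  have : A ⊆ Set.Iio (β + 1) := by
    intro x hx
    have := hc x hx
    exact lt_of_le_of_lt this (Order.lt_succ β)
  exact (countable_Iio_of_lt_omega1 (succ_lt_omega1 hβ)).mono this

/-- Countable suprema stay below `ω₁`. -/
theorem iSup_lt_omega1 (f : ℕ → Ordinal.{0}) (hf : ∀ n, f n < omega1) :
    (⨆ n, f n) < omega1 := by
  apply Ordinal.iSup_lt_ord_lift _ hf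
  rw [Cardinal.mk_nat, Cardinal.lift_aleph0]
  show _ < (Cardinal.aleph 1).ord.cof
  rw [Cardinal.IsRegular.cof_eq Cardinal.isRegular_aleph_one]
  exact Cardinal.aleph0_lt_aleph_one

/-- The sup of a strictly monotone sequence of ordinals is a limit ordinal above each term. -/
theorem lt_iSup_of_strictMono {f : ℕ → Ordinal.{0}} (hf : StrictMono f) (n : ℕ) :
    f n < ⨆ m, f m :=
  lt_of_lt_of_le (hf (Nat.lt_succ_self n)) (Ordinal.le_iSup f (n+1))

theorem isLimit_iSup_of_strictMono {f : ℕ → Ordinal.{0}} (hf : StrictMono f) :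
    Order.IsSuccLimit (⨆ n, f n) := by
  rw [Ordinal.isSuccLimit_iff]
  constructor
  · intro h0
    have := lt_iSup_of_strictMono hf 0
    rw [h0] at this
    exact absurd this (not_lt_zero (a := f 0))
  · intro b hb
    obtain ⟨n, hn⟩ := Ordinal.lt_iSup_iff.1 hb.lt
    exact hb.2 hn (lt_iSup_of_strictMono hf n)

-- ### Part 1: coding and clubs

/-- Encode a pair `(ξ, i)` with `i : ℕ` as the ordinal `ω·ξ + i`. -/
noncomputable def ecode (i : ℕ) (ξ : Ordinal.{0}) : Ordinal.{0} :=
  Ordinal.omega0 * ξ + i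

theorem ecode_inj {i j : ℕ} {ξ η : Ordinal.{0}} (h : ecode i ξ = ecode j η) :
    i = j ∧ ξ = η := by
  have hdiv : ∀ (k : ℕ) (x : Ordinal.{0}), ecode k x / Ordinal.omega0 = x := by
    intro k x
    rw [ecode, Ordinal.mul_add_div _ Ordinal.omega0_ne_zero,
      Ordinal.div_eq_zero_of_lt (Ordinal.nat_lt_omega0 k), add_zero]
  have hmod : ∀ (k : ℕ) (x : Ordinal.{0}), ecode k x % Ordinal.omega0 = k := by
    intro k x
    rw [ecode, Ordinal.mul_add_mod_self, Ordinal.mod_eq_of_lt (Ordinal.nat_lt_omega0 k)]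
  constructor
  · have := (hmod i ξ).symm.trans (h ▸ hmod j η)
    exact_mod_cast this
  · have := (hdiv i ξ).symm.trans (h ▸ hdiv j η)
    exact this

theorem le_ecode (i : ℕ) (ξ : Ordinal.{0}) : ξ ≤ ecode i ξ :=
  le_trans (Ordinal.le_mul_right ξ Ordinal.omega0_pos) le_self_add

theorem ecode_lt_omega1 (i : ℕ) {ξ : Ordinal.{0}} (h : ξ < omega1) :
    ecode i ξ < omega1 := by
  apply lt_omega1_of_card_le
  rw [ecode, Ordinal.card_add, Ordinal.card_mul]
  have h1 : Ordinal.omega0.card * ξ.card ≤ Cardinal.aleph0 := by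
    rw [Ordinal.card_omega0]
    calc Cardinal.aleph0 * ξ.card ≤ Cardinal.aleph0 * Cardinal.aleph0 :=
          mul_le_mul_right (card_lt_of_lt_omega1 h) _
      _ = Cardinal.aleph0 := Cardinal.aleph0_mul_aleph0
  have h2 : (Ordinal.card (i : Ordinal.{0})) ≤ Cardinal.aleph0 := by
    rw [Ordinal.card_nat]
    exact (Cardinal.nat_lt_aleph0 i).le
  calc Ordinal.omega0.card * ξ.card + (Ordinal.card (i : Ordinal.{0}))
      ≤ Cardinal.aleph0 + Cardinal.aleph0 := add_le_add h1 h2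
    _ = Cardinal.aleph0 := Cardinal.aleph0_add_aleph0

theorem ecode_lt_fix {δ : Ordinal.{0}} (hδ : Ordinal.omega0 * δ = δ) (i : ℕ)
    {ξ : Ordinal.{0}} (h : ξ < δ) : ecode i ξ < δ := by
  calc ecode i ξ < Ordinal.omega0 * ξ + Ordinal.omega0 :=
        add_lt_add_right (Ordinal.nat_lt_omega0 i) _
    _ = Ordinal.omega0 * (Order.succ ξ) := (Ordinal.mul_succ _ _).symm
    _ ≤ Ordinal.omega0 * δ := mul_le_mul_right (Order.succ_le_of_lt h) _
    _ = δ := hδ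

theorem ecode_lt_fix_iff {δ : Ordinal.{0}} (hδ : Ordinal.omega0 * δ = δ) (i : ℕ)
    {ξ : Ordinal.{0}} : ecode i ξ < δ ↔ ξ < δ :=
  ⟨fun h => lt_of_le_of_lt (le_ecode i ξ) h, ecode_lt_fix hδ i⟩

/-- Encode a pair (ordinal, set of ordinals) as a set of ordinals. -/
noncomputable def pcode (s : Ordinal.{0}) (X : Set Ordinal.{0}) : Set Ordinal.{0} :=
  (ecode 0 '' X) ∪ {ecode 1 s}

theorem pcode_inj {s s' : Ordinal.{0}} {X X' : Set Ordinal.{0}}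
    (h : pcode s X = pcode s' X') : s = s' ∧ X = X' := by
  have key : ∀ {t t' : Ordinal.{0}} {Y Y' : Set Ordinal.{0}}, pcode t Y = pcode t' Y' →
      t = t' ∧ Y ⊆ Y' := by
    intro t t' Y Y' hh
    constructor
    · have h1 : ecode 1 t ∈ pcode t' Y' := by rw [← hh]; exact Or.inr rfl
      rcases h1 with h1 | h1
      · obtain ⟨x, _, hx⟩ := h1
        exact absurd (ecode_inj hx).1 (by norm_num)
      · exact (ecode_inj h1).2
    · intro x hx
      have h1 : ecode 0 x ∈ pcode t' Y' := by rw [← hh]; exact Or.inl ⟨x, hx, rfl⟩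
      rcases h1 with h1 | h1
      · obtain ⟨y, hy, hxy⟩ := h1
        rwa [← (ecode_inj hxy).2]
      · exact absurd (ecode_inj h1).1 (by norm_num)
  obtain ⟨h1, h2⟩ := key h
  obtain ⟨-, h3⟩ := key h.symm
  exact ⟨h1, Set.Subset.antisymm h2 h3⟩

theorem pcode_countable {s : Ordinal.{0}} {X : Set Ordinal.{0}}
    (hX : X.Countable) : (pcode s X).Countable :=
  (hX.image _).union (Set.countable_singleton _)

theorem pcode_subset {s : Ordinal.{0}} {X : Set Ordinal.{0}} (hs : s < omega1)
    (hX : X ⊆ Set.Iio omega1) : pcode s X ⊆ Set.Iio omega1 := by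
  rintro x (⟨y, hy, rfl⟩ | hx)
  · exact ecode_lt_omega1 0 (hX hy)
  · rw [Set.mem_singleton_iff.1 hx]
    exact ecode_lt_omega1 1 hs

-- ### Clubs
theorem club_pick {C : Set Ordinal.{0}} (hC : IsClubIn C) {x : Ordinal.{0}} (hx : x < omega1) :
    ∃ γ, γ ∈ C ∧ x < γ ∧ γ < omega1 := by
  obtain ⟨γ, hγC, hγ⟩ := hC.2.2 x hx
  exact ⟨γ, hγC, hγ, hC.1 hγC⟩

theorem isClubIn_inter {C D : Set Ordinal.{0}} (hC : IsClubIn C) (hD : IsClubIn D) :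
    IsClubIn (C ∩ D) := by
  refine ⟨fun x hx => hC.1 hx.1, ?_, ?_⟩
  · intro δ hδ hlim hunb
    have hCu : ∀ β < δ, ∃ γ ∈ C, β < γ ∧ γ < δ := fun β hβ => by
      obtain ⟨γ, hγ, h1, h2⟩ := hunb β hβ; exact ⟨γ, hγ.1, h1, h2⟩
    have hDu : ∀ β < δ, ∃ γ ∈ D, β < γ ∧ γ < δ := fun β hβ => by
      obtain ⟨γ, hγ, h1, h2⟩ := hunb β hβ; exact ⟨γ, hγ.2, h1, h2⟩
    exact ⟨hC.2.1 δ hδ hlim hCu, hD.2.1 δ hδ hlim hDu⟩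
  · intro β hβ
    -- alternating sequence
    have cpick : ∀ x : {o : Ordinal.{0} // o < omega1}, {y : {o : Ordinal.{0} // o < omega1} // y.1 ∈ C ∧ x.1 < y.1} := by
      intro x
      have := club_pick hC x.2
      exact ⟨⟨Classical.choose this, (Classical.choose_spec this).2.2⟩,
        (Classical.choose_spec this).1, (Classical.choose_spec this).2.1⟩
    have dpick : ∀ x : {o : Ordinal.{0} // o < omega1}, {y : {o : Ordinal.{0} // o < omega1} // y.1 ∈ D ∧ x.1 < y.1} := by
      intro x
      have := club_pick hD x.2
      exact ⟨⟨Classical.choose this, (Classical.choose_spec this).2.2⟩,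
        (Classical.choose_spec this).1, (Classical.choose_spec this).2.1⟩
    let u : ℕ → {o : Ordinal.{0} // o < omega1} := fun n =>
      Nat.rec ⟨β, hβ⟩ (fun _ x => (dpick (cpick x).1).1) n
    have hu : ∀ n, (u n).1 < ((cpick (u n)).1 : {o : Ordinal.{0} // o < omega1}).1 ∧
        ((cpick (u n)).1).1 < (u (n+1)).1 := by
      intro n
      refine ⟨(cpick (u n)).2.2, ?_⟩
      show ((cpick (u n)).1).1 < ((dpick (cpick (u n)).1).1).1
      exact (dpick (cpick (u n)).1).2.2
    have humono : StrictMono (fun n => (u n).1) := by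
      apply strictMono_nat_of_lt_succ
      intro n
      exact lt_trans (hu n).1 (hu n).2
    set δ := ⨆ n, (u n).1 with hδdef
    have hδω1 : δ < omega1 := iSup_lt_omega1 _ (fun n => (u n).2)
    have hδlim : Order.IsSuccLimit δ := isLimit_iSup_of_strictMono humono
    have hCunb : ∀ β' < δ, ∃ γ ∈ C, β' < γ ∧ γ < δ := by
      intro β' hβ'
      obtain ⟨n, hn⟩ := Ordinal.lt_iSup_iff.1 hβ'
      refine ⟨((cpick (u n)).1).1, (cpick (u n)).2.1, lt_trans hn (hu n).1, ?_⟩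
      exact lt_of_lt_of_le (lt_trans (hu n).2 (humono (Nat.lt_succ_self (n+1))))
        (Ordinal.le_iSup (fun n => (u n).1) (n+2))
    have hDunb : ∀ β' < δ, ∃ γ ∈ D, β' < γ ∧ γ < δ := by
      intro β' hβ'
      obtain ⟨n, hn⟩ := Ordinal.lt_iSup_iff.1 hβ'
      refine ⟨(u (n+1)).1, (dpick (cpick (u n)).1).2.1, ?_, ?_⟩
      · exact lt_trans hn (lt_trans (hu n).1 (hu n).2)
      · exact lt_of_lt_of_le (humono (Nat.lt_succ_self (n+1)))
          (Ordinal.le_iSup (fun n => (u n).1) (n+2))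
    refine ⟨δ, ⟨hC.2.1 δ hδω1 hδlim hCunb, hD.2.1 δ hδω1 hδlim hDunb⟩, ?_⟩
    exact lt_of_lt_of_le (lt_trans (hu 0).1 (hu 0).2) (Ordinal.le_iSup (fun n => (u n).1) 1)

/-- The club of multiplicatively ω-closed ordinals below ω₁. -/
def Cfix : Set Ordinal.{0} := {δ | δ < omega1 ∧ 0 < δ ∧ Ordinal.omega0 * δ = δ}

theorem isClubIn_Cfix : IsClubIn Cfix := by
  refine ⟨fun x hx => hx.1, ?_, ?_⟩
  · intro δ hδ hlim hunb
    refine ⟨hδ, hlim.pos, ?_⟩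
    apply le_antisymm _ (Ordinal.le_mul_right δ Ordinal.omega0_pos)
    rw [Ordinal.mul_le_iff_of_isSuccLimit hlim]
    intro b hb
    obtain ⟨γ, hγ, hbγ, hγδ⟩ := hunb b hb
    calc Ordinal.omega0 * b ≤ Ordinal.omega0 * γ := mul_le_mul_right hbγ.le _
      _ = γ := hγ.2.2
      _ ≤ δ := hγδ.le
  · intro β hβ
    set γ := Ordinal.nfp (fun x => Ordinal.omega0 * x) (β + 1) with hγdef
    have hγfix : Ordinal.omega0 * γ = γ :=
      Ordinal.nfp_fp (Ordinal.isNormal_mul_right Ordinal.omega0_pos) (β + 1)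
    have hβγ : β + 1 ≤ γ := Ordinal.le_nfp _ _
    have hγω1 : γ < omega1 := by
      apply Ordinal.nfp_lt_ord
      · show Cardinal.aleph0 < (Cardinal.aleph 1).ord.cof
        rw [Cardinal.IsRegular.cof_eq Cardinal.isRegular_aleph_one]
        exact Cardinal.aleph0_lt_aleph_one
      · intro i hi
        apply lt_omega1_of_card_le
        rw [Ordinal.card_mul, Ordinal.card_omega0]
        calc Cardinal.aleph0 * i.card ≤ Cardinal.aleph0 * Cardinal.aleph0 :=
              mul_le_mul_right (card_lt_of_lt_omega1 hi) _
          _ = Cardinal.aleph0 := Cardinal.aleph0_mul_aleph0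
      · exact succ_lt_omega1 hβ
    have hββ1 : β < β + 1 := by
      rw [Ordinal.add_one_eq_succ]; exact Order.lt_succ β
    refine ⟨γ, ⟨hγω1, ?_, hγfix⟩, lt_of_lt_of_le hββ1 hβγ⟩
    exact lt_of_le_of_lt (zero_le (a := β)) (lt_of_lt_of_le hββ1 hβγ)

-- ### Part 2: more clubs, ladders, density

theorem isClubIn_foldr (l : List (Set Ordinal.{0})) (hl : ∀ S ∈ l, IsClubIn S) :
    IsClubIn (l.foldr (· ∩ ·) Cfix) := by
  induction l with
  | nil => exact isClubIn_Cfix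
  | cons S t ih =>
    exact isClubIn_inter (hl S (List.mem_cons_self))
      (ih (fun T hT => hl T (List.mem_cons_of_mem S hT)))

theorem mem_foldr_iff (l : List (Set Ordinal.{0})) (x : Ordinal.{0}) :
    x ∈ l.foldr (· ∩ ·) Cfix ↔ x ∈ Cfix ∧ ∀ S ∈ l, x ∈ S := by
  induction l with
  | nil => simp
  | cons S t ih =>
    simp only [List.foldr_cons, Set.mem_inter_iff, ih, List.mem_cons]
    constructor
    · rintro ⟨h1, h2, h3⟩
      exact ⟨h2, fun T hT => hT.elim (fun e => e ▸ h1) (h3 T)⟩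
    · rintro ⟨h1, h2⟩
      exact ⟨h2 S (Or.inl rfl), h1, fun T hT => h2 T (Or.inr hT)⟩

/-- Construction of a ladder inside an unbounded subset of a countable limit ordinal. -/
theorem exists_ladder {δ : Ordinal.{0}} (hδ1 : δ < omega1) (hδl : Order.IsSuccLimit δ)
    {D : Set Ordinal.{0}} (hD : ∀ β < δ, ∃ γ, γ ∈ D ∧ β < γ ∧ γ < δ) :
    ∃ f : ℕ → Ordinal.{0}, StrictMono f ∧ (∀ n, f n ∈ D) ∧ (∀ n, f n < δ) ∧
      ∀ β < δ, ∃ n, β < f n := by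
  have hne : (Set.Iio δ).Nonempty := ⟨0, hδl.pos⟩
  obtain ⟨e, he⟩ := (countable_Iio_of_lt_omega1 hδ1).exists_eq_range hne
  have heδ : ∀ n, e n < δ := by
    intro n
    have : e n ∈ Set.Iio δ := he ▸ Set.mem_range_self n
    exact this
  have pick : ∀ x : {o : Ordinal.{0} // o < δ},
      {y : Ordinal.{0} // y ∈ D ∧ y < δ ∧ x.1 < y} := by
    intro x
    have h := hD x.1 x.2
    exact ⟨Classical.choose h, (Classical.choose_spec h).1,
      (Classical.choose_spec h).2.2, (Classical.choose_spec h).2.1⟩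
  let u : ℕ → {y : Ordinal.{0} // y ∈ D ∧ y < δ} := fun n =>
    Nat.rec (let p := pick ⟨e 0, heδ 0⟩; ⟨p.1, p.2.1, p.2.2.1⟩)
      (fun m x =>
        let p := pick ⟨max x.1 (e (m+1)), max_lt x.2.2 (heδ (m+1))⟩
        ⟨p.1, p.2.1, p.2.2.1⟩) n
  have hstep : ∀ n, max (u n).1 (e (n+1)) < (u (n+1)).1 := by
    intro n
    exact (pick ⟨max (u n).1 (e (n+1)), max_lt (u n).2.2 (heδ (n+1))⟩).2.2.2
  have hu0 : e 0 < (u 0).1 := (pick ⟨e 0, heδ 0⟩).2.2.2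
  have hmono : StrictMono (fun n => (u n).1) :=
    strictMono_nat_of_lt_succ fun n => lt_of_le_of_lt (le_max_left _ _) (hstep n)
  refine ⟨fun n => (u n).1, hmono, fun n => (u n).2.1, fun n => (u n).2.2, ?_⟩
  intro β hβ
  have : β ∈ Set.range e := he ▸ hβ
  obtain ⟨n, rfl⟩ := this
  cases n with
  | zero => exact ⟨0, hu0⟩
  | succ m => exact ⟨m+1, lt_of_le_of_lt (le_max_right _ _) (hstep m)⟩

-- ### density
open scoped Classical in
noncomputable def dens (Q : ℕ → Prop) (n : ℕ) : ℝ :=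
  ((Finset.range n).filter Q).card / n

theorem dens_nonneg (Q : ℕ → Prop) (n : ℕ) : 0 ≤ dens Q n := by
  unfold dens; positivity

theorem dens_le_one (Q : ℕ → Prop) (n : ℕ) : dens Q n ≤ 1 := by
  classical
  unfold dens
  rcases Nat.eq_zero_or_pos n with h | h
  · simp [h]
  · rw [div_le_one (by exact_mod_cast h)]
    exact_mod_cast (Finset.card_filter_le _ _).trans (le_of_eq (Finset.card_range n))

theorem hitRatio_eq_dens (α : ℕ → Ordinal.{0}) (A : Set Ordinal.{0}) :
    hitRatio α A = dens (fun k => α k ∈ A) := by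
  funext n
  unfold hitRatio dens
  congr 1

theorem dens_mono {Q R : ℕ → Prop} (h : ∀ k, Q k → R k) (n : ℕ) :
    dens Q n ≤ dens R n := by
  classical
  rcases Nat.eq_zero_or_pos n with hn | hn
  · simp [dens, hn]
  · unfold dens
    rw [div_le_div_iff_of_pos_right (by exact_mod_cast hn)]
    exact_mod_cast Finset.card_le_card
      (Finset.filter_subset_filter _ (le_refl _) |>.trans
        (by intro x hx; simp only [Finset.mem_filter] at hx ⊢; exact ⟨hx.1, h x hx.2⟩))

theorem dens_isBounded (Q : ℕ → Prop) :
    Filter.IsBoundedUnder (· ≥ ·) Filter.atTop (dens Q) :=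
  Filter.isBoundedUnder_of ⟨0, fun n => dens_nonneg Q n⟩

theorem dens_isCobounded (Q : ℕ → Prop) :
    Filter.IsCoboundedUnder (· ≥ ·) Filter.atTop (dens Q) :=
  Filter.IsBoundedUnder.isCoboundedUnder_ge
    (Filter.isBoundedUnder_of ⟨1, fun n => dens_le_one Q n⟩)

theorem le_liminf_dens_iff {Q : ℕ → Prop} {a : ℝ} :
    a ≤ Filter.liminf (dens Q) Filter.atTop ↔
      ∀ ε > (0:ℝ), ∀ᶠ n in Filter.atTop, a - ε < dens Q n := by
  constructor
  · intro h ε hε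
    exact Filter.eventually_lt_of_lt_liminf (lt_of_lt_of_le (by linarith) h)
      (dens_isBounded Q)
  · intro h
    apply le_of_forall_pos_le_add
    intro ε hε
    have h2 : ∀ᶠ n in Filter.atTop, a - ε ≤ dens Q n :=
      (h ε hε).mono fun n hn => hn.le
    have := Filter.le_liminf_of_le (dens_isCobounded Q) h2
    linarith

-- ### Part 3: more density lemmas

theorem infinite_of_liminf_dens {Q : ℕ → Prop} {a : ℝ} (ha : 0 < a)
    (h : a ≤ Filter.liminf (dens Q) Filter.atTop) : {k | Q k}.Infinite := by
  classical
  by_contra hfin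
  rw [Set.not_infinite] at hfin
  set F := hfin.toFinset with hF
  have hsub : ∀ n, (Finset.range n).filter Q ⊆ F := by
    intro n x hx
    rw [Set.Finite.mem_toFinset]
    exact (Finset.mem_filter.1 hx).2
  have hdle : ∀ n : ℕ, 0 < n → dens Q n ≤ (F.card : ℝ) / n := by
    intro n hn
    unfold dens
    rw [div_le_div_iff_of_pos_right (by exact_mod_cast hn)]
    exact_mod_cast Finset.card_le_card (hsub n)
  have h1 : ∀ᶠ n in Filter.atTop, a - a/2 < dens Q n :=
    (le_liminf_dens_iff.1 h) (a/2) (by linarith)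
  have h2 : ∀ᶠ n : ℕ in Filter.atTop, (F.card : ℝ) / n < a/2 :=
    (tendsto_const_div_atTop_nhds_zero_nat (F.card : ℝ)).eventually_lt_const (by linarith)
  have h3 : ∀ᶠ n : ℕ in Filter.atTop, 0 < n := Filter.eventually_gt_atTop 0
  obtain ⟨n, ⟨hn1, hn2⟩, hn3⟩ := ((h1.and h2).and h3).exists
  have := hdle n hn3
  linarith

/-- Transfer liminf density along an inclusion modulo a finite set. -/
theorem liminf_dens_transfer {Q R : ℕ → Prop} {a : ℝ} (F : Finset ℕ)
    (hsub : ∀ k, Q k → R k ∨ k ∈ F)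
    (h : a ≤ Filter.liminf (dens Q) Filter.atTop) :
    a ≤ Filter.liminf (dens R) Filter.atTop := by
  classical
  rw [le_liminf_dens_iff]
  intro ε hε
  have h1 : ∀ᶠ n in Filter.atTop, a - ε/2 < dens Q n :=
    (le_liminf_dens_iff.1 h) (ε/2) (by linarith)
  have h2 : ∀ᶠ n : ℕ in Filter.atTop, (F.card : ℝ) / n < ε/2 :=
    (tendsto_const_div_atTop_nhds_zero_nat (F.card : ℝ)).eventually_lt_const (by linarith)
  have h3 : ∀ᶠ n : ℕ in Filter.atTop, 0 < n := Filter.eventually_gt_atTop 0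
  filter_upwards [h1, h2, h3] with n hn1 hn2 hn3
  have hkey : dens Q n ≤ dens R n + (F.card : ℝ) / n := by
    unfold dens
    rw [← add_div, div_le_div_iff_of_pos_right (show (0:ℝ) < n by exact_mod_cast hn3)]
    have : (Finset.range n).filter Q ⊆ ((Finset.range n).filter R) ∪ F := by
      intro x hx
      rw [Finset.mem_union]
      rcases hsub x (Finset.mem_filter.1 hx).2 with h' | h'
      · exact Or.inl (Finset.mem_filter.2 ⟨(Finset.mem_filter.1 hx).1, h'⟩)
      · exact Or.inr h'
    have hcard : ((Finset.range n).filter Q).card ≤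
        ((Finset.range n).filter R).card + F.card :=
      le_trans (Finset.card_le_card this) (Finset.card_union_le _ _)
    exact_mod_cast hcard
  linarith

/-- Pairwise disjoint sets of lower density at least `a` : there are at most `1/a` of them. -/
theorem card_mul_le_one {ι : Type*} [DecidableEq ι] {T : Finset ι} {M : ι → ℕ → Prop} {a : ℝ}
    (hdisj : ∀ i ∈ T, ∀ j ∈ T, i ≠ j → ∀ k, ¬ (M i k ∧ M j k))
    (hlim : ∀ i ∈ T, a ≤ Filter.liminf (dens (M i)) Filter.atTop) :
    (T.card : ℝ) * a ≤ 1 := by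
  classical
  apply le_of_forall_pos_le_add
  intro ε' hε'
  rcases Finset.eq_empty_or_nonempty T with rfl | hTne
  · simp; linarith
  have hc : (0:ℝ) < T.card := by exact_mod_cast Finset.card_pos.2 hTne
  set ε := ε' / T.card with hεdef
  have hε : 0 < ε := div_pos hε' hc
  have h1 : ∀ᶠ n in Filter.atTop, ∀ i ∈ T, a - ε < dens (M i) n := by
    rw [Filter.eventually_all_finset]
    intro i hi
    exact le_liminf_dens_iff.1 (hlim i hi) ε hε
  have h3 : ∀ᶠ n : ℕ in Filter.atTop, 0 < n := Filter.eventually_gt_atTop 0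
  obtain ⟨n, hn1, hn3⟩ := (h1.and h3).exists
  have hsum : ∑ i ∈ T, dens (M i) n ≤ 1 := by
    unfold dens
    rw [← Finset.sum_div]
    rw [div_le_one (show (0:ℝ) < n by exact_mod_cast hn3)]
    have hdisjF : ∀ i ∈ T, ∀ j ∈ T, i ≠ j →
        Disjoint ((Finset.range n).filter (M i)) ((Finset.range n).filter (M j)) := by
      intro i hi j hj hij
      rw [Finset.disjoint_left]
      intro x hx hx'
      exact hdisj i hi j hj hij x ⟨(Finset.mem_filter.1 hx).2, (Finset.mem_filter.1 hx').2⟩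
    have : ∑ i ∈ T, ((Finset.range n).filter (M i)).card =
        (T.biUnion (fun i => (Finset.range n).filter (M i))).card :=
      (Finset.card_biUnion hdisjF).symm
    rw [show (∑ i ∈ T, (((Finset.range n).filter (M i)).card : ℝ)) =
        ((∑ i ∈ T, ((Finset.range n).filter (M i)).card : ℕ) : ℝ) by push_cast; ring]
    rw [this]
    have := Finset.card_le_card (show T.biUnion (fun i => (Finset.range n).filter (M i)) ⊆
        Finset.range n from Finset.biUnion_subset.2 (fun i _ => Finset.filter_subset _ _))
    calc ((T.biUnion fun i => (Finset.range n).filter (M i)).card : ℝ) ≤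
          ((Finset.range n).card : ℝ) := by exact_mod_cast this
      _ = n := by rw [Finset.card_range]
  have hlow : (T.card : ℝ) * (a - ε) ≤ ∑ i ∈ T, dens (M i) n := by
    have := Finset.card_nsmul_le_sum T (fun i => dens (M i) n) (a - ε)
      (fun i hi => (hn1 i hi).le)
    rwa [nsmul_eq_mul] at this
  have : (T.card : ℝ) * (a - ε) ≤ 1 := le_trans hlow hsum
  have hεe : (T.card : ℝ) * ε = ε' := by
    rw [hεdef]; field_simp
  nlinarith [this, hεe]

-- ### Part 4: CH enumeration
open Cardinal

theorem CH_transfer.{u2,v2}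
    (h : (2 : Cardinal.{u2}) ^ Cardinal.aleph0 = Cardinal.aleph 1) :
    (2 : Cardinal.{v2}) ^ Cardinal.aleph0 = Cardinal.aleph 1 := by
  have h1 : (2 : Cardinal.{max u2 v2}) ^ Cardinal.aleph0 = Cardinal.aleph 1 := by
    have := congrArg (Cardinal.lift.{v2, u2}) h
    rwa [Cardinal.lift_power, Cardinal.lift_aleph0, Cardinal.lift_two, Cardinal.lift_aleph,
      Ordinal.lift_one] at this
  apply Cardinal.lift_injective.{max u2 v2, v2}
  rwa [Cardinal.lift_power, Cardinal.lift_aleph0, Cardinal.lift_two, Cardinal.lift_aleph,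
    Ordinal.lift_one]

theorem mk_Iio_omega1 : #(↥(Set.Iio omega1)) = Cardinal.aleph 1 := by
  rw [Ordinal.mk_Iio_ordinal]
  show Cardinal.lift.{1} (Cardinal.aleph 1).ord.card = _
  rw [Cardinal.card_ord, Cardinal.lift_aleph, Ordinal.lift_one]

theorem aleph1_pow_aleph0 (CH : (2 : Cardinal.{1}) ^ Cardinal.aleph0 = Cardinal.aleph 1) :
    (Cardinal.aleph 1 : Cardinal.{1}) ^ (Cardinal.aleph0 : Cardinal.{1}) = Cardinal.aleph 1 := by
  rw [← CH, ← Cardinal.power_mul, Cardinal.aleph0_mul_aleph0]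

/-- Under CH there is an `ω₁`-enumeration of countable subsets of `ω₁`,
    hitting every such set cofinally often. -/
theorem exists_W (CH : (2 : Cardinal.{1}) ^ Cardinal.aleph0 = Cardinal.aleph 1) :
    ∃ W : Ordinal.{0} → Set Ordinal.{0},
      ∀ X : Set Ordinal.{0}, X ⊆ Set.Iio omega1 → X.Countable →
        ∀ β < omega1, ∃ γ, β < γ ∧ γ < omega1 ∧ W γ = X := by
  classical
  set T : Set (Set Ordinal.{0}) := {X | X ⊆ Set.Iio omega1 ∧ X.Countable} with hT
  -- T has at most aleph 1 elements
  have hTcard : #(↥T) ≤ Cardinal.aleph 1 := by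
    have fenum : ∀ X : ↥T, X.1.Nonempty → {g : ℕ → ↥(Set.Iio omega1) //
        X.1 = Set.range (fun n => (g n).1)} := by
      intro X hne
      have h := X.2.2.exists_eq_range hne
      set f := Classical.choose h with hf
      have hfs : X.1 = Set.range f := Classical.choose_spec h
      refine ⟨fun n => ⟨f n, X.2.1 (by rw [hfs]; exact Set.mem_range_self n)⟩, ?_⟩
      simpa using hfs
    set φ : ↥T → Option (ℕ → ↥(Set.Iio omega1)) := fun X =>
      if h : X.1.Nonempty then some (fenum X h).1 else none with hφ
    have hinj : Function.Injective φ := by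
      intro X Y hXY
      rw [hφ] at hXY
      simp only at hXY
      by_cases hX : X.1.Nonempty <;> by_cases hY : Y.1.Nonempty
      · rw [dif_pos hX, dif_pos hY] at hXY
        have := Option.some_injective _ hXY
        apply Subtype.ext
        rw [(fenum X hX).2, (fenum Y hY).2, this]
      · rw [dif_pos hX, dif_neg hY] at hXY; exact absurd hXY (Option.some_ne_none _)
      · rw [dif_neg hX, dif_pos hY] at hXY; exact absurd hXY.symm (Option.some_ne_none _)
      · apply Subtype.ext
        rw [Set.not_nonempty_iff_eq_empty.1 hX, Set.not_nonempty_iff_eq_empty.1 hY]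
    calc #(↥T) ≤ #(Option (ℕ → ↥(Set.Iio omega1))) := Cardinal.mk_le_of_injective hinj
      _ = #(ℕ → ↥(Set.Iio omega1)) + 1 := Cardinal.mk_option
      _ = (Cardinal.aleph 1) ^ (Cardinal.aleph0 : Cardinal.{1}) + 1 := by
          rw [Cardinal.mk_arrow, Cardinal.lift_id', Cardinal.mk_nat, Cardinal.lift_aleph0,
            mk_Iio_omega1]
      _ = Cardinal.aleph 1 + 1 := by rw [aleph1_pow_aleph0 CH]
      _ = Cardinal.aleph 1 := Cardinal.add_one_eq (Cardinal.aleph0_le_aleph 1)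
  -- build an injection from T × Iio ω₁ into Iio ω₁
  have hprod : #(↥T × ↥(Set.Iio omega1)) ≤ #(↥(Set.Iio omega1)) := by
    rw [Cardinal.mk_prod, Cardinal.lift_id, Cardinal.lift_id, mk_Iio_omega1]
    calc #(↥T) * Cardinal.aleph 1 ≤ Cardinal.aleph 1 * Cardinal.aleph 1 :=
          mul_le_mul_left hTcard _
      _ = Cardinal.aleph 1 := Cardinal.mul_eq_self (Cardinal.aleph0_le_aleph 1)
  obtain ⟨j⟩ := Cardinal.le_def _ _ |>.1 hprod
  set W : Ordinal.{0} → Set Ordinal.{0} := fun γ =>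
    if h : ∃ p : ↥T × ↥(Set.Iio omega1), (j p).1 = γ then ((Classical.choose h).1 : ↥T).1
    else ∅ with hW
  refine ⟨W, ?_⟩
  intro X hX1 hX2 β hβ
  have hXT : X ∈ T := ⟨hX1, hX2⟩
  set S : Set Ordinal.{0} := Set.range (fun η : ↥(Set.Iio omega1) => (j (⟨X, hXT⟩, η)).1)
    with hS
  have hSsub : S ⊆ Set.Iio omega1 := by
    rintro x ⟨η, rfl⟩
    exact (j (⟨X, hXT⟩, η)).2
  have hSinj : Function.Injective (fun η : ↥(Set.Iio omega1) => (j (⟨X, hXT⟩, η)).1) := by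
    intro η η' hη
    have := j.injective (Subtype.ext hη)
    exact (Prod.mk.injEq _ _ _ _ ▸ this).2
  have hSunc : ¬ S.Countable := by
    rw [Cardinal.countable_iff_lt_aleph_one, Cardinal.mk_range_eq _ hSinj, mk_Iio_omega1]
    exact lt_irrefl _
  obtain ⟨γ, hγS, hβγ⟩ := unbounded_of_uncountable hSsub hSunc β hβ
  obtain ⟨η, hη⟩ := hγS
  have hex : ∃ p : ↥T × ↥(Set.Iio omega1), (j p).1 = γ := ⟨(⟨X, hXT⟩, η), hη⟩
  refine ⟨γ, hβγ, hSsub ⟨η, hη⟩, ?_⟩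
  rw [hW]
  simp only [dif_pos hex]
  have hspec := Classical.choose_spec hex
  have : Classical.choose hex = (⟨X, hXT⟩, η) := by
    apply j.injective
    apply Subtype.ext
    rw [hspec]
    exact hη.symm
  rw [this]

-- ### Part 5: diamond implies clubsuit

theorem limOmega1_unbounded_self {δ : Ordinal.{0}} (hδ : Order.IsSuccLimit δ) :
    ∀ β < δ, ∃ γ, γ ∈ Set.Iio δ ∧ β < γ ∧ γ < δ := by
  intro β hβ
  have h1 : β + 1 < δ := by
    rw [Ordinal.add_one_eq_succ]
    exact hδ.succ_lt hβ
  have h2 : β < β + 1 := by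
    rw [Ordinal.add_one_eq_succ]; exact Order.lt_succ β
  exact ⟨β + 1, h1, h2, h1⟩

/-- The club of `δ` in which `A` is unbounded (for uncountable `A`). -/
theorem isClubIn_unbdd {A : Set Ordinal.{0}} (hA : A ⊆ Set.Iio omega1)
    (hunc : ¬ A.Countable) :
    IsClubIn {δ | δ < omega1 ∧ Order.IsSuccLimit δ ∧ ∀ β < δ, ∃ γ, γ ∈ A ∧ β < γ ∧ γ < δ} := by
  refine ⟨fun x hx => hx.1, ?_, ?_⟩
  · intro δ hδ hlim hunb
    refine ⟨hδ, hlim, ?_⟩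
    intro β hβ
    obtain ⟨γ, hγ, hβγ, hγδ⟩ := hunb β hβ
    obtain ⟨x, hx, h1, h2⟩ := hγ.2.2 β hβγ
    exact ⟨x, hx, h1, lt_trans h2 hγδ⟩
  · intro β hβ
    have pick : ∀ x : {o : Ordinal.{0} // o < omega1},
        {y : {o : Ordinal.{0} // o < omega1} // y.1 ∈ A ∧ x.1 < y.1} := by
      intro x
      have h := unbounded_of_uncountable hA hunc x.1 x.2
      exact ⟨⟨Classical.choose h, hA (Classical.choose_spec h).1⟩,
        (Classical.choose_spec h).1, (Classical.choose_spec h).2⟩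
    let u : ℕ → {o : Ordinal.{0} // o < omega1} := fun n =>
      Nat.rec (pick ⟨β, hβ⟩).1 (fun _ x => (pick x).1) n
    have hmem : ∀ n, (u (n+1)).1 ∈ A ∧ (u n).1 < (u (n+1)).1 := fun n => (pick (u n)).2
    have humono : StrictMono (fun n => (u n).1) :=
      strictMono_nat_of_lt_succ fun n => (hmem n).2
    set δ := ⨆ n, (u n).1 with hδdef
    have hδω1 : δ < omega1 := iSup_lt_omega1 _ (fun n => (u n).2)
    have hδlim : Order.IsSuccLimit δ := isLimit_iSup_of_strictMono humono
    refine ⟨δ, ⟨hδω1, hδlim, ?_⟩, ?_⟩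
    · intro β' hβ'
      obtain ⟨n, hn⟩ := Ordinal.lt_iSup_iff.1 hβ'
      refine ⟨(u (n+1)).1, (hmem n).1, lt_trans hn (hmem n).2, ?_⟩
      exact lt_of_lt_of_le (humono (Nat.lt_succ_self (n+1)))
        (Ordinal.le_iSup (fun n => (u n).1) (n+2))
    · have : β < (u 0).1 := (pick ⟨β, hβ⟩).2.2
      exact lt_of_lt_of_le (lt_trans this (humono Nat.zero_lt_one))
        (Ordinal.le_iSup (fun n => (u n).1) 1)

theorem diamond_to_clubsuitInf {a : ℝ} (ha0 : 0 < a) (ha1 : a ≤ 1)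
    (hD : DiamondOmega1) : ClubSuitInf limOmega1 a := by
  classical
  obtain ⟨B, hB1, hB2⟩ := hD
  set α : Ordinal.{0} → ℕ → Ordinal.{0} := fun δ =>
    if h : δ ∈ limOmega1 then
      if hub : ∀ β < δ, ∃ γ, γ ∈ B δ ∧ β < γ ∧ γ < δ then
        Classical.choose (exists_ladder h.1 h.2 hub)
      else Classical.choose (exists_ladder h.1 h.2 (limOmega1_unbounded_self h.2))
    else fun _ => 0 with hα
  have hαgood : GoodSeq limOmega1 α := by
    intro δ hδ
    rw [hα]
    simp only [dif_pos hδ]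
    by_cases hub : ∀ β < δ, ∃ γ, γ ∈ B δ ∧ β < γ ∧ γ < δ
    · rw [dif_pos hub]
      obtain ⟨h1, h2, h3, h4⟩ := Classical.choose_spec (exists_ladder hδ.1 hδ.2 hub)
      exact ⟨h1, h3, h4⟩
    · rw [dif_neg hub]
      obtain ⟨h1, h2, h3, h4⟩ :=
        Classical.choose_spec (exists_ladder hδ.1 hδ.2 (limOmega1_unbounded_self hδ.2))
      exact ⟨h1, h3, h4⟩
  refine ⟨α, hαgood, ?_⟩
  intro A hA hunc
  obtain ⟨δ, ⟨hδS, hδC⟩⟩ := (hB2 A hA).2 _ (isClubIn_unbdd hA hunc)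
  obtain ⟨hδlim, hδguess⟩ := hδS
  have hub : ∀ β < δ, ∃ γ, γ ∈ B δ ∧ β < γ ∧ γ < δ := by
    intro β hβ
    obtain ⟨γ, hγA, h1, h2⟩ := hδC.2.2 β hβ
    exact ⟨γ, by rw [← hδguess]; exact ⟨hγA, h2⟩, h1, h2⟩
  refine ⟨δ, hδlim, ?_⟩
  have hαδ : α δ = Classical.choose (exists_ladder hδlim.1 hδlim.2 hub) := by
    rw [hα]; simp only [dif_pos hδlim, dif_pos hub]
  obtain ⟨h1, h2, h3, h4⟩ := Classical.choose_spec (exists_ladder hδlim.1 hδlim.2 hub)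
  have hmem : ∀ n, α δ n ∈ A := by
    intro n
    have : α δ n ∈ B δ := by rw [hαδ]; exact h2 n
    rw [← hδguess] at this
    exact this.1
  rw [hitRatio_eq_dens]
  rw [le_liminf_dens_iff]
  intro ε hε
  filter_upwards [Filter.eventually_gt_atTop 0] with n hn
  have : dens (fun k => α δ k ∈ A) n = 1 := by
    unfold dens
    rw [Finset.filter_true_of_mem (fun x _ => hmem x), Finset.card_range]
    field_simp
  rw [this]
  linarith

-- ### Part 6: clubsuit implies diamond: candidate limit sets

/-- `n` is an index at which the ladder at `δ` codes an initial segment of `L` with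
    splitting point above `β`. -/
def Mpred (W : Ordinal.{0} → Set Ordinal.{0}) (α : Ordinal.{0} → ℕ → Ordinal.{0})
    (δ : Ordinal.{0}) (L : Set Ordinal.{0}) (β : Ordinal.{0}) (n : ℕ) : Prop :=
  ∃ s : Ordinal.{0}, β < s ∧ s < δ ∧ W (α δ n) = pcode s (L ∩ Set.Iio s)

/-- `L` is a candidate limit set at `δ`. -/
def GoodL (W : Ordinal.{0} → Set Ordinal.{0}) (α : Ordinal.{0} → ℕ → Ordinal.{0}) (a : ℝ)
    (δ : Ordinal.{0}) (L : Set Ordinal.{0}) : Prop :=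
  L ⊆ Set.Iio δ ∧
    ∀ β < δ, a ≤ Filter.liminf (dens (Mpred W α δ L β)) Filter.atTop

theorem goodL_card {W : Ordinal.{0} → Set Ordinal.{0}} {α : Ordinal.{0} → ℕ → Ordinal.{0}}
    {a : ℝ} {δ : Ordinal.{0}} (hδ : Order.IsSuccLimit δ)
    (T : Finset (Set Ordinal.{0})) (hT : ∀ L ∈ T, GoodL W α a δ L) :
    (T.card : ℝ) * a ≤ 1 := by
  classical
  -- difference points
  set d : Set Ordinal.{0} → Set Ordinal.{0} → Ordinal.{0} := fun L L' =>
    if h : ∃ x, (x ∈ L ∧ x ∉ L') ∨ (x ∈ L' ∧ x ∉ L) then Classical.choose h else 0 with hd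
  have hdlt : ∀ L ∈ T, ∀ L' ∈ T, d L L' < δ := by
    intro L hL L' hL'
    simp only [hd]
    by_cases h : ∃ x, (x ∈ L ∧ x ∉ L') ∨ (x ∈ L' ∧ x ∉ L)
    · rw [dif_pos h]
      rcases Classical.choose_spec h with h' | h'
      · exact (hT L hL).1 h'.1
      · exact (hT L' hL').1 h'.1
    · rw [dif_neg h]
      exact hδ.pos
  set β : Ordinal.{0} := (T ×ˢ T).sup (fun p => d p.1 p.2) with hβ
  have hβδ : β < δ := by
    rw [hβ, Finset.sup_lt_iff hδ.pos]
    rintro ⟨L, L'⟩ hp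
    rw [Finset.mem_product] at hp
    exact hdlt L hp.1 L' hp.2
  apply card_mul_le_one (T := T) (a := a) (M := fun L n => Mpred W α δ L β n)
  · intro L hL L' hL' hLL' k hk
    obtain ⟨⟨s, hs1, hs2, hs3⟩, ⟨s', hs1', hs2', hs3'⟩⟩ := hk
    obtain ⟨rfl, heq⟩ := pcode_inj (hs3.symm.trans hs3')
    -- the difference point
    have hx : ∃ x, (x ∈ L ∧ x ∉ L') ∨ (x ∈ L' ∧ x ∉ L) := by
      by_contra hc
      push_neg at hc
      apply hLL'
      ext x
      exact ⟨fun h => (hc x).1 h, fun h => (hc x).2 h⟩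
    have hdx := Classical.choose_spec hx
    have hdle : d L L' ≤ β := by
      rw [hβ]
      have hmemp : (L, L') ∈ T ×ˢ T := Finset.mem_product.2 ⟨hL, hL'⟩
      exact Finset.le_sup (f := fun p : Set Ordinal.{0} × Set Ordinal.{0} => d p.1 p.2) hmemp
    have hdval : d L L' = Classical.choose hx := by
      simp only [hd]
      rw [dif_pos hx]
    have hxs : Classical.choose hx < s := lt_of_le_of_lt (hdval ▸ hdle) hs1
    rcases hdx with h' | h'
    · have : Classical.choose hx ∈ L' ∩ Set.Iio s := heq ▸ ⟨h'.1, hxs⟩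
      exact h'.2 this.1
    · have : Classical.choose hx ∈ L ∩ Set.Iio s := heq.symm ▸ ⟨h'.1, hxs⟩
      exact h'.2 this.1
  · intro L hL
    exact (hT L hL).2 β hβδ

/-- Enumeration of the candidate limit sets by `Fin K`. -/
theorem goodL_enum {W : Ordinal.{0} → Set Ordinal.{0}} {α : Ordinal.{0} → ℕ → Ordinal.{0}}
    {a : ℝ} (ha0 : 0 < a) {δ : Ordinal.{0}} (hδ : Order.IsSuccLimit δ) :
    ∃ f : Fin (⌊1/a⌋₊) → Set Ordinal.{0},
      (∀ L, GoodL W α a δ L → ∃ i, f i = L) ∧ (∀ i, f i ⊆ Set.Iio δ) := by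
  classical
  set K := ⌊1/a⌋₊ with hK
  have hcard : ∀ T : Finset (Set Ordinal.{0}), (∀ L ∈ T, GoodL W α a δ L) → T.card ≤ K := by
    intro T hT
    have := goodL_card hδ T hT
    rw [hK]
    apply Nat.le_floor
    rw [le_div_iff₀ ha0]
    linarith [this]
  have hfin : {L | GoodL W α a δ L}.Finite := by
    by_contra hinf
    obtain ⟨T, hT1, hT2⟩ := (show Set.Infinite _ from hinf).exists_subset_card_eq (K + 1)
    have := hcard T (fun L hL => hT1 hL)
    omega
  set l := hfin.toFinset.toList with hl
  have hlen : l.length ≤ K := by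
    rw [hl, Finset.length_toList]
    apply hcard
    intro L hL
    rw [Set.Finite.mem_toFinset] at hL
    exact hL
  refine ⟨fun i => l.getD i ∅, ?_, ?_⟩
  · intro L hL
    have : L ∈ l := by
      rw [hl, Finset.mem_toList, Set.Finite.mem_toFinset]
      exact hL
    obtain ⟨j, hj, hjL⟩ := List.getElem_of_mem this
    refine ⟨⟨j, lt_of_lt_of_le hj hlen⟩, ?_⟩
    show l.getD j ∅ = L
    rw [List.getD_eq_getElem l ∅ hj]
    exact hjL
  · intro i
    show l.getD (i : ℕ) ∅ ⊆ Set.Iio δ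
    by_cases h : (i : ℕ) < l.length
    · have : l.getD i ∅ = l[(i:ℕ)] := List.getD_eq_getElem l ∅ h
      rw [this]
      have hmem : l[(i:ℕ)] ∈ hfin.toFinset.toList := List.getElem_mem h
      rw [Finset.mem_toList, Set.Finite.mem_toFinset] at hmem
      exact hmem.1
    · have : l.getD i ∅ = ∅ := List.getD_eq_default l ∅ (le_of_not_gt h)
      rw [this]
      exact Set.empty_subset _

-- ### Part 7: the main guessing construction

theorem guess_main
    {W : Ordinal.{0} → Set Ordinal.{0}}
    (hW : ∀ X : Set Ordinal.{0}, X ⊆ Set.Iio omega1 → X.Countable →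
        ∀ β < omega1, ∃ γ, β < γ ∧ γ < omega1 ∧ W γ = X)
    {α : Ordinal.{0} → ℕ → Ordinal.{0}} (hα : GoodSeq limOmega1 α)
    {a : ℝ} (ha0 : 0 < a)
    (hcs : ∀ A : Set Ordinal.{0}, A ⊆ Set.Iio omega1 → ¬ A.Countable →
      ∃ δ ∈ limOmega1, a ≤ Filter.liminf (hitRatio (α δ) A) Filter.atTop)
    (A : Set Ordinal.{0}) (hA : A ⊆ Set.Iio omega1)
    {C : Set Ordinal.{0}} (hC : IsClubIn C) :
    ∃ δ ∈ limOmega1, δ ∈ C ∧ GoodL W α a δ (A ∩ Set.Iio δ) := by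
  classical
  -- the choice of the next element
  have hpick : ∀ s : Ordinal.{0}, s < omega1 →
      ∃ γ, γ < omega1 ∧ (∃ c ∈ C, s < c ∧ c < γ) ∧ W γ = pcode s (A ∩ Set.Iio s) := by
    intro s hs
    obtain ⟨c, hcC, hsc, hcω⟩ := club_pick hC hs
    have hXsub : pcode s (A ∩ Set.Iio s) ⊆ Set.Iio omega1 :=
      pcode_subset hs (fun x hx => hA hx.1)
    have hXcnt : (pcode s (A ∩ Set.Iio s)).Countable :=
      pcode_countable ((countable_Iio_of_lt_omega1 hs).mono Set.inter_subset_right)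
    obtain ⟨γ, hcγ, hγω, hWγ⟩ := hW _ hXsub hXcnt c hcω
    exact ⟨γ, hγω, ⟨c, hcC, hsc, hcγ⟩, hWγ⟩
  set g : Ordinal.{0} → Ordinal.{0} := Ordinal.lt_wf.fix (fun ξ ih =>
    if hs : ξ.bsup (fun η hη => ih η hη + 1) < omega1 then
      Classical.choose (hpick _ hs) else 0) with hg
  set sfun : Ordinal.{0} → Ordinal.{0} := fun ξ => ξ.bsup (fun η _ => g η + 1) with hsfun
  have hgeq : ∀ ξ, g ξ = if hs : sfun ξ < omega1 then Classical.choose (hpick _ hs) else 0 := by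
    intro ξ
    rw [hg]
    rw [WellFounded.fix_eq]
  have hkey : ∀ ξ, ξ < omega1 → sfun ξ < omega1 ∧ g ξ < omega1 ∧
      (∃ c ∈ C, sfun ξ < c ∧ c < g ξ) ∧
      W (g ξ) = pcode (sfun ξ) (A ∩ Set.Iio (sfun ξ)) := by
    intro ξ
    induction ξ using Ordinal.lt_wf.induction with
    | _ ξ IH =>
      intro hξ
      have hs : sfun ξ < omega1 := by
        apply Ordinal.bsup_lt_ord
        · show ξ.card < (Cardinal.aleph 1).ord.cof
          rw [Cardinal.IsRegular.cof_eq Cardinal.isRegular_aleph_one]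
          exact lt_omega1_iff.1 hξ
        · intro η hη
          exact succ_lt_omega1 ((IH η hη (lt_trans hη hξ)).2.1)
      have hgv : g ξ = Classical.choose (hpick _ hs) := by
        rw [hgeq ξ, dif_pos hs]
      obtain ⟨h1, h2, h3⟩ := Classical.choose_spec (hpick _ hs)
      exact ⟨hs, hgv ▸ h1, hgv ▸ h2, hgv ▸ h3⟩
  have hlt_s : ∀ η ξ : Ordinal.{0}, η < ξ → g η < sfun ξ := by
    intro η ξ h
    have h1 : g η < g η + 1 := by
      rw [Ordinal.add_one_eq_succ]; exact Order.lt_succ _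
    exact lt_of_lt_of_le h1 (Ordinal.le_bsup (fun η (_ : η < ξ) => g η + 1) η h)
  have hs_lt_g : ∀ ξ, ξ < omega1 → sfun ξ < g ξ := by
    intro ξ hξ
    obtain ⟨c, _, h1, h2⟩ := (hkey ξ hξ).2.2.1
    exact lt_trans h1 h2
  have hgmono : ∀ η ξ, η < ξ → ξ < omega1 → g η < g ξ :=
    fun η ξ h hξ => lt_trans (hlt_s η ξ h) (hs_lt_g ξ hξ)
  have hgreflect : ∀ η ξ, η < omega1 → ξ < omega1 → g η < g ξ → η < ξ := by
    intro η ξ hη hξ hlt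
    by_contra hc
    push_neg at hc
    rcases eq_or_lt_of_le hc with rfl | h
    · exact lt_irrefl _ hlt
    · exact absurd (hgmono ξ η h hη) (not_lt.2 hlt.le)
  -- the uncountable image set
  set A' : Set Ordinal.{0} := g '' (Set.Iio omega1) with hA'
  have hA'sub : A' ⊆ Set.Iio omega1 := by
    rintro x ⟨ξ, hξ, rfl⟩
    exact (hkey ξ hξ).2.1
  have hA'unc : ¬ A'.Countable := by
    rw [Cardinal.countable_iff_lt_aleph_one, hA']
    have hinj : Set.InjOn g (Set.Iio omega1) := by
      intro x hx y hy hxy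
      by_contra hne
      rcases lt_or_gt_of_ne hne with h | h
      · exact absurd hxy (ne_of_lt (hgmono x y h hy))
      · exact absurd hxy.symm (ne_of_lt (hgmono y x h hx))
    rw [Cardinal.mk_image_eq_of_injOn g _ hinj, mk_Iio_omega1]
    exact lt_irrefl _
  obtain ⟨δ, hδlim, hliminf⟩ := hcs A' hA'sub hA'unc
  rw [hitRatio_eq_dens] at hliminf
  obtain ⟨hαmono, hαlt, hαcof⟩ := hα δ hδlim
  have hNinf : {n | α δ n ∈ A'}.Infinite := infinite_of_liminf_dens ha0 hliminf
  have hhit : ∀ β < δ, ∃ n, α δ n ∈ A' ∧ β < α δ n := by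
    intro β hβ
    obtain ⟨m, hm⟩ := hαcof β hβ
    obtain ⟨n, hnN, hmn⟩ := hNinf.exists_gt m
    exact ⟨n, hnN, lt_trans hm (hαmono hmn)⟩
  -- δ belongs to C
  have hCunb : ∀ β < δ, ∃ c ∈ C, β < c ∧ c < δ := by
    intro β hβ
    obtain ⟨n, hnN, hβn⟩ := hhit β hβ
    obtain ⟨ξ, hξ, hgξ⟩ := hnN
    obtain ⟨n', hn'N, hn'⟩ := hhit (α δ n) (hαlt n)
    obtain ⟨ξ', hξ', hgξ'⟩ := hn'N
    have hξξ' : ξ < ξ' := hgreflect ξ ξ' hξ hξ' (by rw [hgξ, hgξ']; exact hn')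
    obtain ⟨c, hcC, hc1, hc2⟩ := (hkey ξ' hξ').2.2.1
    refine ⟨c, hcC, ?_, ?_⟩
    · calc β < α δ n := hβn
        _ = g ξ := hgξ.symm
        _ < sfun ξ' := hlt_s ξ ξ' hξξ'
        _ < c := hc1
    · calc c < g ξ' := hc2
        _ = α δ n' := hgξ'
        _ < δ := hαlt n'
  have hδC : δ ∈ C := hC.2.1 δ hδlim.1 hδlim.2 hCunb
  -- the guessed set is a candidate limit set
  refine ⟨δ, hδlim, hδC, Set.inter_subset_right, ?_⟩
  intro β hβ
  obtain ⟨n0, hn0N, hβn0⟩ := hhit β hβ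
  apply liminf_dens_transfer (Finset.range (n0+1)) _ hliminf
  intro k hkN
  by_cases hk : k ≤ n0
  · exact Or.inr (Finset.mem_range.2 (Nat.lt_succ_of_le hk))
  · left
    push_neg at hk
    obtain ⟨ξk, hξk, hgξk⟩ := hkN
    obtain ⟨ξ0, hξ0, hgξ0⟩ := hn0N
    have hα0k : α δ n0 < α δ k := hαmono hk
    have hξ0k : ξ0 < ξk := hgreflect ξ0 ξk hξ0 hξk (by rw [hgξ0, hgξk]; exact hα0k)
    refine ⟨sfun ξk, ?_, ?_, ?_⟩
    · calc β < α δ n0 := hβn0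
        _ = g ξ0 := hgξ0.symm
        _ < sfun ξk := hlt_s ξ0 ξk hξ0k
    · calc sfun ξk < g ξk := hs_lt_g ξk hξk
        _ = α δ k := hgξk
        _ < δ := hαlt k
    · have hsδ : sfun ξk < δ := by
        calc sfun ξk < g ξk := hs_lt_g ξk hξk
          _ = α δ k := hgξk
          _ < δ := hαlt k
      have hseteq : (A ∩ Set.Iio δ) ∩ Set.Iio (sfun ξk) = A ∩ Set.Iio (sfun ξk) := by
        ext x
        constructor
        · rintro ⟨⟨h1, _⟩, h3⟩; exact ⟨h1, h3⟩
        · rintro ⟨h1, h2⟩; exact ⟨⟨h1, lt_trans h2 hsδ⟩, h2⟩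
      rw [← hgξk, (hkey ξk hξk).2.2.2, hseteq]

-- ### Part 8: diagonal argument and conclusion

theorem clubsuitInf_to_diamond
    (CH : (2 : Cardinal.{1}) ^ Cardinal.aleph0 = Cardinal.aleph 1)
    {a : ℝ} (ha0 : 0 < a) (h : ClubSuitInf limOmega1 a) : DiamondOmega1 := by
  classical
  obtain ⟨α, hαgood, hcs⟩ := h
  obtain ⟨W, hW⟩ := exists_W CH
  set K := ⌊1/a⌋₊ with hKdef
  have hσex : ∀ δ : Ordinal.{0}, Order.IsSuccLimit δ → ∃ f : Fin K → Set Ordinal.{0},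
      (∀ L, GoodL W α a δ L → ∃ i, f i = L) ∧ (∀ i, f i ⊆ Set.Iio δ) :=
    fun δ hδ => goodL_enum ha0 hδ
  set σ : Ordinal.{0} → Fin K → Set Ordinal.{0} := fun δ =>
    if h : Order.IsSuccLimit δ then Classical.choose (hσex δ h) else fun _ => ∅ with hσ
  set V : Fin K → Ordinal.{0} → Set Ordinal.{0} := fun i δ =>
    {ξ | ecode (i : ℕ) ξ ∈ σ δ i} ∩ Set.Iio δ with hV
  by_contra hnd
  have hcex : ∀ i : Fin K, ∃ A : Set Ordinal.{0}, A ⊆ Set.Iio omega1 ∧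
      ∃ C : Set Ordinal.{0}, IsClubIn C ∧
        ∀ δ, δ ∈ limOmega1 → A ∩ Set.Iio δ = V i δ → δ ∉ C := by
    intro i
    by_contra hco
    push_neg at hco
    apply hnd
    refine ⟨V i, fun δ _ => Set.inter_subset_right, ?_⟩
    intro A hA
    refine ⟨fun x hx => hx.1.1, ?_⟩
    intro C hCl
    obtain ⟨δ, hδ1, hδ2, hδ3⟩ := hco A hA C hCl
    exact ⟨δ, ⟨⟨hδ1, hδ2⟩, hδ3⟩⟩
  choose Afun hAsub Cfun hCclub hbad using hcex
  set X : Set Ordinal.{0} := ⋃ i : Fin K, ecode (i : ℕ) '' (Afun i) with hX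
  have hXsub : X ⊆ Set.Iio omega1 := by
    rintro x hx
    rw [hX, Set.mem_iUnion] at hx
    obtain ⟨i, ⟨ξ, hξ, rfl⟩⟩ := hx
    exact ecode_lt_omega1 _ (hAsub i hξ)
  set Cstar := (List.ofFn Cfun).foldr (· ∩ ·) Cfix with hCstardef
  have hCstar : IsClubIn Cstar := by
    apply isClubIn_foldr
    intro S hS
    rw [List.mem_ofFn] at hS
    obtain ⟨i, rfl⟩ := hS
    exact hCclub i
  obtain ⟨δ, hδlim, hδC, hδgood⟩ := guess_main hW hαgood ha0 hcs X hXsub hCstar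
  have hδfold := (mem_foldr_iff _ δ).1 hδC
  have hδfix : Ordinal.omega0 * δ = δ := hδfold.1.2.2
  have hδCi : ∀ i : Fin K, δ ∈ Cfun i := by
    intro i
    exact hδfold.2 _ (List.mem_ofFn.2 ⟨i, rfl⟩)
  have hσval : σ δ = Classical.choose (hσex δ hδlim.2) := by
    rw [hσ]
    simp only [dif_pos hδlim.2]
  obtain ⟨i, hi⟩ := (Classical.choose_spec (hσex δ hδlim.2)).1 _ hδgood
  have hσi : σ δ i = X ∩ Set.Iio δ := by rw [hσval, hi]
  have hVeq : Afun i ∩ Set.Iio δ = V i δ := by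
    rw [hV]
    ext ξ
    simp only [Set.mem_inter_iff, Set.mem_setOf_eq, Set.mem_Iio]
    constructor
    · rintro ⟨hξA, hξδ⟩
      refine ⟨?_, hξδ⟩
      rw [hσi]
      refine ⟨?_, ?_⟩
      · rw [hX, Set.mem_iUnion]
        exact ⟨i, ⟨ξ, hξA, rfl⟩⟩
      · exact ecode_lt_fix hδfix _ hξδ
    · rintro ⟨hξσ, hξδ⟩
      refine ⟨?_, hξδ⟩
      rw [hσi] at hξσ
      obtain ⟨hξX, -⟩ := hξσ
      rw [hX, Set.mem_iUnion] at hξX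
      obtain ⟨j, ⟨x, hxA, hxe⟩⟩ := hξX
      obtain ⟨hji, rfl⟩ := ecode_inj hxe
      have : j = i := Fin.ext hji
      rwa [← this]
  exact hbad i δ hδlim hVeq (hδCi i)


/-- Assume CH. Then for every `a ∈ (0,1]`, `♣^{inf ≥ a}` is equivalent to `◊`. -/
theorem clubSuitInf_iff_diamond
    (CH : (2 : Cardinal) ^ Cardinal.aleph0 = Cardinal.aleph 1)
    (a : ℝ) (ha0 : 0 < a) (ha1 : a ≤ 1) :
    ClubSuitInf limOmega1 a ↔ DiamondOmega1 := by
  constructor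
  · exact clubsuitInf_to_diamond (CH_transfer CH) ha0
  · exact diamond_to_clubsuitInf ha0 ha1
end

section
/- For all real numbers a, b with 0 < a < 1 and 0 < b < 1, the principle ♣^{sup≥a} is equivalent to the principle ♣^{sup≥b}. -/
open Filter Set

namespace ClubAux
open scoped Classical

noncomputable def hc (α : ℕ → Ordinal.{0}) (A : Set Ordinal.{0}) (n : ℕ) : ℕ :=
  ((Finset.range n).filter (fun k => α k ∈ A)).card

lemma hitRatio_eq (α : ℕ → Ordinal.{0}) (A : Set Ordinal.{0}) (n : ℕ) :
    hitRatio α A n = (hc α A n : ℝ) / n := rfl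

lemma hc_le (α : ℕ → Ordinal.{0}) (A : Set Ordinal.{0}) (n : ℕ) : hc α A n ≤ n := by
  simpa [hc] using Finset.card_filter_le (Finset.range n) (fun k => α k ∈ A)

lemma hitRatio_nonneg (α : ℕ → Ordinal.{0}) (A : Set Ordinal.{0}) (n : ℕ) :
    0 ≤ hitRatio α A n := by
  rw [hitRatio_eq]; positivity

lemma hitRatio_le_one (α : ℕ → Ordinal.{0}) (A : Set Ordinal.{0}) (n : ℕ) :
    hitRatio α A n ≤ 1 := by
  rw [hitRatio_eq]
  rcases Nat.eq_zero_or_pos n with h | h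
  · simp [h]
  · rw [div_le_one (by exact_mod_cast h)]
    exact_mod_cast hc_le α A n

lemma hr_bdd (α : ℕ → Ordinal.{0}) (A : Set Ordinal.{0}) :
    Filter.IsBoundedUnder (· ≤ ·) Filter.atTop (hitRatio α A) :=
  Filter.isBoundedUnder_of ⟨1, fun n => hitRatio_le_one α A n⟩

lemma hr_cobdd (α : ℕ → Ordinal.{0}) (A : Set Ordinal.{0}) :
    Filter.IsCoboundedUnder (· ≤ ·) Filter.atTop (hitRatio α A) :=
  (Filter.isBoundedUnder_of (r := (· ≥ ·)) (u := hitRatio α A)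
    ⟨0, fun n => hitRatio_nonneg α A n⟩).isCoboundedUnder_le

lemma card_le_aleph0_of_lt_omega1 {o : Ordinal.{0}} (h : o < omega1) :
    o.card ≤ Cardinal.aleph0 := by
  have h1 : o.card < Cardinal.aleph 1 := Cardinal.lt_ord.mp h
  have h2 : Cardinal.aleph 1 = Order.succ (Cardinal.aleph0) := by
    rw [← Cardinal.aleph_zero, ← Cardinal.aleph_succ, Ordinal.succ_zero]
  rw [h2, Order.lt_succ_iff] at h1
  exact h1

lemma countable_Iio_o {o : Ordinal.{0}} (h : o < omega1) : (Set.Iio o).Countable := by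
  rw [← Set.countable_coe_iff, ← Cardinal.mk_le_aleph0_iff, Ordinal.mk_Iio_ordinal,
    ← Cardinal.lift_aleph0.{1, 0}]
  exact Cardinal.lift_le.mpr (card_le_aleph0_of_lt_omega1 h)

lemma iSup_lt_omega1 (f : ℕ → Ordinal.{0}) (hf : ∀ n, f n < omega1) : iSup f < omega1 := by
  apply Ordinal.iSup_lt_ord ?_ hf
  have : omega1.cof = Cardinal.aleph 1 := Cardinal.isRegular_aleph_one.cof_eq
  rw [this, Cardinal.mk_nat]
  exact Cardinal.aleph0_lt_aleph_one

lemma eventually_div_le (C : ℝ) {ε : ℝ} (hε : 0 < ε) :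
    ∀ᶠ n : ℕ in Filter.atTop, C / n ≤ ε := by
  filter_upwards [(tendsto_const_div_atTop_nhds_zero_nat C).eventually (eventually_le_nhds hε)]
    with n hn using hn

lemma exists_ladder {δ : Ordinal.{0}} (hδ : δ ∈ limOmega1) :
    ∃ ℓ : ℕ → Ordinal.{0}, StrictMono ℓ ∧ (∀ n, ℓ n < δ) ∧ ∀ β < δ, ∃ n, β < ℓ n := by
  obtain ⟨hlt, hlim⟩ := hδ
  obtain ⟨f, hf⟩ := (countable_Iio_o hlt).exists_eq_range ⟨0, hlim.pos⟩
  have hfval : ∀ n, f n < δ := fun n => by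
    have : f n ∈ Set.Iio δ := hf ▸ Set.mem_range_self n
    exact this
  set ℓ : ℕ → Ordinal.{0} :=
    fun n => Nat.rec (f 0 + 1) (fun n ih => max ih (f (n + 1)) + 1) n with hℓ
  have hstep : ∀ n, ℓ (n + 1) = max (ℓ n) (f (n + 1)) + 1 := fun n => rfl
  have hval : ∀ n, ℓ n < δ := by
    intro n
    induction n with
    | zero =>
      show f 0 + 1 < δ
      rw [Ordinal.add_one_eq_succ]
      exact hlim.succ_lt (hfval 0)
    | succ n ih =>
      rw [hstep, Ordinal.add_one_eq_succ]
      exact hlim.succ_lt (max_lt ih (hfval (n + 1)))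
  have hsm : StrictMono ℓ := by
    apply strictMono_nat_of_lt_succ
    intro n
    rw [hstep]
    calc ℓ n ≤ max (ℓ n) (f (n + 1)) := le_max_left _ _
      _ < max (ℓ n) (f (n + 1)) + 1 := by
          rw [Ordinal.add_one_eq_succ]; exact Order.lt_succ _
  refine ⟨ℓ, hsm, hval, ?_⟩
  intro β hβ
  have : β ∈ Set.range f := hf ▸ hβ
  obtain ⟨n, rfl⟩ := this
  cases n with
  | zero =>
    refine ⟨0, ?_⟩
    show f 0 < f 0 + 1
    rw [Ordinal.add_one_eq_succ]; exact Order.lt_succ _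
  | succ n =>
    refine ⟨n + 1, ?_⟩
    rw [hstep]
    calc f (n + 1) ≤ max (ℓ n) (f (n + 1)) := le_max_right _ _
      _ < _ := by rw [Ordinal.add_one_eq_succ]; exact Order.lt_succ _

noncomputable def cl (δ : Ordinal.{0}) : ℕ → Ordinal.{0} :=
  if h : δ ∈ limOmega1 then Classical.choose (exists_ladder h) else fun _ => 0

lemma cl_spec {δ : Ordinal.{0}} (h : δ ∈ limOmega1) :
    StrictMono (cl δ) ∧ (∀ n, cl δ n < δ) ∧ ∀ β < δ, ∃ n, β < cl δ n := by
  rw [cl, dif_pos h]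
  exact Classical.choose_spec (exists_ladder h)


section Step
variable (α : Ordinal.{0} → ℕ → Ordinal.{0}) (A : Set Ordinal.{0})

def SS : Set Ordinal.{0} := A ∪ Set.Ici omega1

lemma SS_not_bddAbove : ¬ BddAbove (SS A) := by
  rintro ⟨x, hx⟩
  have h1 : max x omega1 ∈ SS A := Or.inr (Set.mem_Ici.mpr (le_max_right _ _))
  have h2 : max x omega1 ≤ x := hx h1
  have h3 : max x omega1 + 1 ∈ SS A := by
    refine Or.inr ?_
    calc omega1 ≤ max x omega1 := le_max_right _ _
      _ ≤ max x omega1 + 1 := le_of_lt (by rw [Ordinal.add_one_eq_succ]; exact Order.lt_succ _)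
  have h4 : max x omega1 + 1 ≤ x := hx h3
  have : x < max x omega1 + 1 := by
    calc x ≤ max x omega1 := le_max_left _ _
      _ < max x omega1 + 1 := by rw [Ordinal.add_one_eq_succ]; exact Order.lt_succ _
  exact absurd (lt_of_lt_of_le this h4) (lt_irrefl _)

noncomputable def phi : Ordinal.{0} → Ordinal.{0} := Ordinal.enumOrd (SS A)

lemma phi_strictMono : StrictMono (phi A) :=
  Ordinal.enumOrd_strictMono (SS_not_bddAbove A)

lemma phi_mem (o : Ordinal.{0}) : phi A o ∈ SS A :=
  Ordinal.enumOrd_mem (SS_not_bddAbove A) o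

noncomputable def idx : Ordinal.{0} → Ordinal.{0} := fun x =>
  if hx : x ∈ SS A then Classical.choose (Ordinal.enumOrd_surjective (SS_not_bddAbove A) hx)
  else 0

lemma phi_idx {x : Ordinal.{0}} (hx : x ∈ SS A) : phi A (idx A x) = x := by
  rw [idx, dif_pos hx]
  exact Classical.choose_spec (Ordinal.enumOrd_surjective (SS_not_bddAbove A) hx)

lemma idx_phi (o : Ordinal.{0}) : idx A (phi A o) = o :=
  (phi_strictMono A).injective (phi_idx A (phi_mem A o))

lemma idx_le {x : Ordinal.{0}} (hx : x ∈ SS A) : idx A x ≤ x := by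
  conv_rhs => rw [← phi_idx A hx]
  exact (phi_strictMono A).le_apply

lemma idx_lt_idx {x y : Ordinal.{0}} (hx : x ∈ SS A) (hy : y ∈ SS A) (hxy : x < y) :
    idx A x < idx A y := by
  by_contra h
  push_neg at h
  have h2 := (phi_strictMono A).monotone h
  rw [phi_idx A hy, phi_idx A hx] at h2
  exact absurd (lt_of_lt_of_le hxy h2) (lt_irrefl _)

lemma phi_mem_A (hA1 : A ⊆ Set.Iio omega1) (hA2 : ¬ A.Countable) {ι : Ordinal.{0}}
    (hι : ι < omega1) : phi A ι ∈ A := by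
  rcases phi_mem A ι with h | h
  · exact h
  · exfalso
    apply hA2
    have hsub : A ⊆ (phi A) '' (Set.Iio ι) := by
      intro x hxA
      have hxS : x ∈ SS A := Or.inl hxA
      refine ⟨idx A x, ?_, phi_idx A hxS⟩
      simp only [Set.mem_Iio]
      by_contra hcon
      push_neg at hcon
      have h5 := (phi_strictMono A).monotone hcon
      rw [phi_idx A hxS] at h5
      exact absurd (lt_of_lt_of_le (lt_of_lt_of_le (hA1 hxA) h) h5) (lt_irrefl _)
    exact Set.Countable.mono hsub ((countable_Iio_o hι).image _)

noncomputable def dhat : Ordinal.{0} → Ordinal.{0} := fun σ =>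
  ⨆ ι : (Set.Iio σ), phi A ι.1

def hp (δ : Ordinal.{0}) : ℕ → Prop := fun k => α δ k ∈ A

noncomputable def pb : Ordinal.{0} → ℕ → Ordinal.{0} := fun σ j =>
  idx A (α (dhat A σ) (Nat.nth (hp α A (dhat A σ)) j))

def P (σ : Ordinal.{0}) : Prop :=
  StrictMono (pb α A σ) ∧ (∀ j, pb α A σ j < σ) ∧ ∀ β < σ, ∃ j, β < pb α A σ j

noncomputable def gam : Ordinal.{0} → ℕ → Ordinal.{0} := fun σ =>
  if P α A σ then pb α A σ else cl σ

lemma gam_good : GoodSeq limOmega1 (gam α A) := by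
  intro σ hσ
  by_cases h : P α A σ
  · simp only [gam, if_pos h]; exact h
  · simp only [gam, if_neg h]
    exact cl_spec hσ

end Step

lemma step {b c : ℝ} (hb0 : 0 < b) (hb1 : b < 1) (hc0 : 0 < c)
    (hnb : ∀ β : Ordinal.{0} → ℕ → Ordinal.{0}, GoodSeq limOmega1 β →
      ∃ E : Set Ordinal.{0}, E ⊆ Set.Iio omega1 ∧ ¬ E.Countable ∧
        ∀ δ ∈ limOmega1, Filter.limsup (hitRatio (β δ) E) Filter.atTop < b)
    (α : Ordinal.{0} → ℕ → Ordinal.{0}) (hα : GoodSeq limOmega1 α)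
    (A : Set Ordinal.{0}) (hA1 : A ⊆ Set.Iio omega1) (hA2 : ¬ A.Countable)
    (H : ∀ δ ∈ limOmega1, Filter.limsup (hitRatio (α δ) A) Filter.atTop ≤ c) :
    ∃ A' : Set Ordinal.{0}, A' ⊆ Set.Iio omega1 ∧ ¬ A'.Countable ∧
      ∀ δ ∈ limOmega1, Filter.limsup (hitRatio (α δ) A') Filter.atTop ≤ b * c := by
  obtain ⟨E, hE1, hE2, hE3⟩ := hnb (gam α A) (gam_good α A)
  have hA'A : (phi A) '' E ⊆ A := by
    rintro x ⟨ι, hιE, rfl⟩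
    exact phi_mem_A A hA1 hA2 (hE1 hιE)
  refine ⟨(phi A) '' E, fun x hx => hA1 (hA'A hx), ?_, ?_⟩
  · intro hcon
    apply hE2
    have hsub : E ⊆ (phi A) ⁻¹' ((phi A) '' E) :=
      fun ι hι => Set.mem_preimage.mpr (Set.mem_image_of_mem _ hι)
    exact Set.Countable.mono hsub (hcon.preimage (phi_strictMono A).injective)
  · intro δ hδ
    have hbc : 0 < b * c := mul_pos hb0 hc0
    by_cases hinf : (setOf (hp α A δ)).Infinite
    · -- main case: infinitely many A-hits
      obtain ⟨hmono, hlt, hcof⟩ := hα δ hδ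
      set p : ℕ → Prop := hp α A δ with hp_def
      have hmemA : ∀ j, α δ (Nat.nth p j) ∈ A := fun j => Nat.nth_mem_of_infinite hinf j
      have hmemS : ∀ j, α δ (Nat.nth p j) ∈ SS A := fun j => Or.inl (hmemA j)
      set g : ℕ → Ordinal.{0} := fun j => idx A (α δ (Nat.nth p j)) with hg
      have hφg : ∀ j, phi A (g j) = α δ (Nat.nth p j) := fun j => phi_idx A (hmemS j)
      have hgmono : StrictMono g := fun i j hij =>
        idx_lt_idx A (hmemS i) (hmemS j) (hmono (Nat.nth_strictMono hinf hij))
      set σ : Ordinal.{0} := ⨆ j, g j with hσ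
      have hglt : ∀ j, g j < σ := fun j =>
        lt_of_lt_of_le (hgmono (Nat.lt_succ_self j)) (Ordinal.le_iSup g (j + 1))
      have hcofσ : ∀ β < σ, ∃ j, β < g j := by
        intro β hβ
        by_contra hcon
        push_neg at hcon
        exact absurd (Ordinal.iSup_le hcon) (not_le.mpr hβ)
      have hσlim : σ ∈ limOmega1 := by
        refine ⟨?_, Ordinal.isSuccLimit_iff.mpr ⟨?_, Order.isSuccPrelimit_of_succ_lt ?_⟩⟩
        · exact iSup_lt_omega1 g fun j =>
            lt_trans (lt_of_le_of_lt (idx_le A (hmemS j)) (hlt _)) hδ.1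
        · intro h0
          exact absurd (hglt 0) (by rw [h0]; exact not_lt_zero)
        · intro a ha
          obtain ⟨j, hj⟩ := hcofσ a ha
          exact lt_of_le_of_lt (Order.succ_le_of_lt hj) (hglt j)
      have hdhat : dhat A σ = δ := by
        apply le_antisymm
        · apply Ordinal.iSup_le
          rintro ⟨ι, hι⟩
          obtain ⟨j, hj⟩ := hcofσ ι hι
          refine le_of_lt (lt_trans ((phi_strictMono A) hj) ?_)
          rw [hφg j]
          exact hlt _
        · by_contra hcon
          push_neg at hcon
          obtain ⟨k, hk⟩ := hcof (dhat A σ) hcon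
          have h1 : dhat A σ < α δ (Nat.nth p k) :=
            lt_of_lt_of_le hk (hmono.monotone (Nat.nth_strictMono hinf).le_apply)
          have h2 : phi A (g k) ≤ dhat A σ :=
            Ordinal.le_iSup (fun ι : (Set.Iio σ) => phi A ι.1) ⟨g k, hglt k⟩
          rw [hφg k] at h2
          exact absurd (lt_of_lt_of_le h1 h2) (lt_irrefl _)
      have hpb : pb α A σ = g := by
        funext j
        simp only [pb, hdhat]
        rfl
      have hP : P α A σ := by
        rw [P, hpb]
        exact ⟨hgmono, hglt, hcofσ⟩
      have hγ : gam α A σ = g := by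
        simp only [gam, if_pos hP, hpb]
      have hEσ := hE3 σ hσlim
      rw [hγ] at hEσ
      -- counting: the number of A'-hits of α δ below n is at most the number of
      -- E-hits of g below (number of A-hits of α δ below n)
      have hcount : ∀ n, Nat.count p n = hc (α δ) A n := fun n => by
        rw [Nat.count_eq_card_filter_range]; rfl
      have hcountlt : ∀ {k₁ k₂}, p k₁ → k₁ < k₂ → Nat.count p k₁ < Nat.count p k₂ := by
        intro k₁ k₂ hp1 hlt'
        have h1 : Nat.count p (k₁ + 1) ≤ Nat.count p k₂ := Nat.count_monotone p hlt'
        rw [Nat.count_succ, if_pos hp1] at h1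
        omega
      have hkey : ∀ n, hc (α δ) ((phi A) '' E) n ≤ hc g E (hc (α δ) A n) := by
        intro n
        apply Finset.card_le_card_of_injOn (fun k => Nat.count p k)
        · intro k hk
          simp only [Finset.mem_coe, Finset.mem_filter, Finset.mem_range] at hk ⊢
          obtain ⟨hkn, hkA'⟩ := hk
          have hpk : p k := hA'A hkA'
          constructor
          · rw [← hcount]
            exact hcountlt hpk hkn
          · have hnth : Nat.nth p (Nat.count p k) = k := Nat.nth_count hpk
            show g (Nat.count p k) ∈ E
            rw [hg]
            simp only [hnth]
            obtain ⟨ι, hιE, hφι⟩ := hkA'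
            have : idx A (α δ k) = ι := by rw [← hφι, idx_phi]
            rw [this]
            exact hιE
        · intro k₁ h₁ k₂ h₂ heq
          simp only [Finset.coe_filter, Set.mem_setOf_eq, Finset.mem_range] at h₁ h₂
          by_contra hne
          rcases lt_or_gt_of_ne hne with hlt' | hlt'
          · exact absurd heq (ne_of_lt (hcountlt (hA'A h₁.2) hlt'))
          · exact absurd heq.symm (ne_of_lt (hcountlt (hA'A h₂.2) hlt'))
      -- real analysis finish
      set L := Filter.limsup (hitRatio g E) Filter.atTop with hL
      have hLb : L < b := hEσ
      obtain ⟨θ₀, hθ₀1, hθ₀2⟩ := exists_between hLb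
      set θ : ℝ := max θ₀ (b / 2) with hθ
      have hθL : L < θ := lt_of_lt_of_le hθ₀1 (le_max_left _ _)
      have hθb : θ < b := max_lt hθ₀2 (by linarith)
      have hθpos : 0 < θ := lt_of_lt_of_le (by linarith) (le_max_right _ _)
      have hev : ∀ᶠ M in Filter.atTop, hitRatio g E M < θ :=
        Filter.eventually_lt_of_limsup_lt hθL (hr_bdd g E)
      obtain ⟨N, hN⟩ := Filter.eventually_atTop.mp hev
      set N' : ℕ := max N 1 with hN'
      have hNbound : ∀ M : ℕ, (hc g E M : ℝ) ≤ θ * M + N' := by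
        intro M
        by_cases hM : N' ≤ M
        · have h1 := hN M (le_trans (le_max_left _ _) hM)
          have hMpos : (0 : ℝ) < M := by
            have : 1 ≤ M := le_trans (le_max_right _ _) hM
            exact_mod_cast this
          rw [hitRatio_eq, div_lt_iff₀ hMpos] at h1
          have hN'0 : (0 : ℝ) ≤ N' := Nat.cast_nonneg _
          linarith
        · push_neg at hM
          have h1 : hc g E M ≤ M := hc_le g E M
          have h2 : (M : ℝ) ≤ N' := by exact_mod_cast le_of_lt hM
          have h3 : (hc g E M : ℝ) ≤ M := by exact_mod_cast h1
          nlinarith [Nat.cast_nonneg (α := ℝ) M]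
      set c' : ℝ := (c + b * c / θ) / 2 with hc'
      have hcltc' : c < c' := by
        have h1 : c * θ < c * b := by nlinarith
        have : c < b * c / θ := by
          rw [lt_div_iff₀ hθpos]; nlinarith
        simp only [hc']; linarith
      have hd : θ * c' < b * c := by
        have h1 : θ * c < b * c := by nlinarith
        have h2 : θ * c' = (θ * c + b * c) / 2 := by
          rw [hc']; field_simp
        rw [h2]; linarith
      have hev2 : ∀ᶠ n in Filter.atTop, hitRatio (α δ) A n < c' :=
        Filter.eventually_lt_of_limsup_lt (lt_of_le_of_lt (H δ hδ) hcltc') (hr_bdd _ _)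
      have hev3 : ∀ᶠ n : ℕ in Filter.atTop, (N' : ℝ) / n ≤ b * c - θ * c' :=
        eventually_div_le _ (by linarith)
      apply Filter.limsup_le_of_le (hr_cobdd _ _)
      filter_upwards [hev2, hev3, Filter.eventually_gt_atTop 0] with n h2 h3 hn0
      have hnR : (0 : ℝ) < n := by exact_mod_cast hn0
      have hkn : (hc (α δ) ((phi A) '' E) n : ℝ) ≤ θ * (hc (α δ) A n) + N' := by
        refine le_trans ?_ (hNbound (hc (α δ) A n))
        exact_mod_cast hkey n
      rw [hitRatio_eq, div_lt_iff₀ hnR] at h2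
      rw [hitRatio_eq, div_le_iff₀ hnR]
      rw [div_le_iff₀ hnR] at h3
      nlinarith [le_of_lt hθpos]
    · -- degenerate case: only finitely many A-hits
      have hfin := Set.not_infinite.mp hinf
      have hC : ∀ n, hc (α δ) ((phi A) '' E) n ≤ hfin.toFinset.card := by
        intro n
        apply Finset.card_le_card
        intro k hk
        simp only [Finset.mem_filter, Finset.mem_range] at hk
        rw [Set.Finite.mem_toFinset]
        exact hA'A hk.2
      apply Filter.limsup_le_of_le (hr_cobdd _ _)
      filter_upwards [eventually_div_le (hfin.toFinset.card : ℝ) hbc,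
        Filter.eventually_gt_atTop 0] with n h1 hn0
      have hnR : (0 : ℝ) < n := by exact_mod_cast hn0
      rw [hitRatio_eq]
      calc (hc (α δ) ((phi A) '' E) n : ℝ) / n
          ≤ (hfin.toFinset.card : ℝ) / n := by
            apply div_le_div_of_nonneg_right ?_ (le_of_lt hnR)
            exact_mod_cast hC n
        _ ≤ b * c := h1


lemma csImp {a b : ℝ} (ha0 : 0 < a) (hb0 : 0 < b) (hb1 : b < 1) :
    ClubSuitSup limOmega1 a → ClubSuitSup limOmega1 b := by
  intro ha
  by_contra hnb
  rw [ClubSuitSup] at hnb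
  push_neg at hnb
  have hnb' : ∀ β : Ordinal.{0} → ℕ → Ordinal.{0}, GoodSeq limOmega1 β →
      ∃ E : Set Ordinal.{0}, E ⊆ Set.Iio omega1 ∧ ¬ E.Countable ∧
        ∀ δ ∈ limOmega1, Filter.limsup (hitRatio (β δ) E) Filter.atTop < b := by
    intro β hβ
    obtain ⟨E, h1, h2, h3⟩ := hnb β hβ
    exact ⟨E, h1, h2, h3⟩
  obtain ⟨α, hαg, hαguess⟩ := ha
  have iter : ∀ k : ℕ, ∃ A : Set Ordinal.{0}, A ⊆ Set.Iio omega1 ∧ ¬ A.Countable ∧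
      ∀ δ ∈ limOmega1, Filter.limsup (hitRatio (α δ) A) Filter.atTop ≤ b ^ (k + 1) := by
    intro k
    induction k with
    | zero =>
      obtain ⟨A, h1, h2, h3⟩ := hnb' α hαg
      exact ⟨A, h1, h2, fun δ hδ => by simpa using le_of_lt (h3 δ hδ)⟩
    | succ k ih =>
      obtain ⟨A, h1, h2, h3⟩ := ih
      obtain ⟨A', h1', h2', h3'⟩ :=
        step hb0 hb1 (pow_pos hb0 (k + 1)) hnb' α hαg A h1 h2 h3
      refine ⟨A', h1', h2', fun δ hδ => ?_⟩
      calc Filter.limsup (hitRatio (α δ) A') Filter.atTop ≤ b * b ^ (k + 1) := h3' δ hδ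
        _ = b ^ (k + 2) := by ring
  obtain ⟨K, hK⟩ := exists_pow_lt_of_lt_one ha0 hb1
  obtain ⟨A, h1, h2, h3⟩ := iter K
  obtain ⟨δ, hδ, hguess⟩ := hαguess A h1 h2
  have hub : Filter.limsup (hitRatio (α δ) A) Filter.atTop ≤ b ^ (K + 1) := h3 δ hδ
  have hlt : b ^ (K + 1) < a := by
    have h4 : b ^ (K + 1) ≤ b ^ K := by
      have := pow_le_pow_of_le_one (le_of_lt hb0) (le_of_lt hb1) (Nat.le_succ K)
      exact this
    exact lt_of_le_of_lt h4 hK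
  linarith

end ClubAux


/-- For all `a, b ∈ (0,1)`, the principle `♣^{sup ≥ a}` is equivalent to `♣^{sup ≥ b}`. -/
theorem clubSuitSup_iff (a b : ℝ) (ha0 : 0 < a) (ha1 : a < 1) (hb0 : 0 < b) (hb1 : b < 1) :
    ClubSuitSup limOmega1 a ↔ ClubSuitSup limOmega1 b :=
  ⟨fun h => ClubAux.csImp ha0 hb0 hb1 h, fun h => ClubAux.csImp hb0 ha0 ha1 h⟩
end

section
/- Let a ∈ (0,1), a ≤ b < √a, and let S ⊆ Lim(ω₁) be stationary. Let ⟨A_δ : δ ∈ S⟩, with A_δ = {α_{δ,n} : n < ω} strictly increasing cofinal in δ, witness ♣_S^{sup≥a}. Let A ⊆ ω₁ be uncountable such that for every δ ∈ S, for all sufficiently large n, |{k < n : α_{δ,k} ∈ A}|/n < b. Let S' be the set of δ ∈ S with limsup_n |{k < n : α_{δ,k} ∈ A}|/n ≥ a, and for δ ∈ S' let B_δ = A_δ ∩ A (which is infinite, enumerated in increasing order as {β_{δ,n} : n < ω}). Then for every uncountable B ⊆ A, the set of δ ∈ S' with limsup_n |{k < n : β_{δ,k} ∈ B}|/n ≥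 b is stationary in ω₁. -/
open Filter Set

section Helpers
open scoped Classical

open scoped Classical

lemma hitRatio_nonneg (α : ℕ → Ordinal.{0}) (A : Set Ordinal.{0}) (n : ℕ) :
    0 ≤ hitRatio α A n := by
  unfold hitRatio; positivity

lemma hitRatio_le_one (α : ℕ → Ordinal.{0}) (A : Set Ordinal.{0}) (n : ℕ) :
    hitRatio α A n ≤ 1 := by
  unfold hitRatio
  rcases Nat.eq_zero_or_pos n with h | h
  · simp [h]
  · rw [div_le_one (by exact_mod_cast h)]
    exact_mod_cast (Finset.card_filter_le _ _).trans_eq (Finset.card_range n)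

lemma hitRatio_mono (α : ℕ → Ordinal.{0}) {A B : Set Ordinal.{0}} (h : A ⊆ B) (n : ℕ) :
    hitRatio α A n ≤ hitRatio α B n := by
  unfold hitRatio
  rcases Nat.eq_zero_or_pos n with hn | hn
  · simp [hn]
  · have hn' : (0:ℝ) < n := by exact_mod_cast hn
    rw [div_le_div_iff_of_pos_right hn']
    exact_mod_cast Finset.card_le_card
      (Finset.monotone_filter_right _ (fun k _ hk => h hk))

lemma countable_Iio_omega1 {o : Ordinal.{0}} (ho : o < omega1) : (Set.Iio o).Countable := by
  rw [Cardinal.countable_iff_lt_aleph_one, Ordinal.mk_Iio_ordinal]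
  have h1 : o.card < Cardinal.aleph 1 := Cardinal.lt_ord.1 ho
  calc Cardinal.lift.{1} o.card < Cardinal.lift.{1} (Cardinal.aleph 1) := Cardinal.lift_lt.2 h1
    _ = Cardinal.aleph 1 := by rw [Cardinal.lift_aleph, Ordinal.lift_one]

lemma one_lt_omega1 : 1 < omega1 := by
  rw [omega1, Cardinal.lt_ord, Ordinal.card_one]
  exact lt_of_lt_of_le Cardinal.one_lt_aleph0 Cardinal.aleph0_lt_aleph_one.le

lemma bounded_of_countable {s : Set Ordinal.{0}} (hs : s ⊆ Set.Iio omega1) (hc : s.Countable) :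
    ∃ η < omega1, ∀ y ∈ s, y < η := by
  rcases s.eq_empty_or_nonempty with rfl | hne
  · exact ⟨1, one_lt_omega1, by simp⟩
  · obtain ⟨f, rfl⟩ := Set.Countable.exists_eq_range hc hne
    refine ⟨Ordinal.lsub f, ?_, ?_⟩
    · apply Ordinal.lsub_lt_ord
      · rw [omega1, Cardinal.isRegular_aleph_one.cof_eq, Cardinal.mk_nat]
        exact Cardinal.aleph0_lt_aleph_one
      · exact fun i => hs (Set.mem_range_self i)
    · rintro y ⟨i, rfl⟩
      exact Ordinal.lt_lsub f i

lemma exists_gt_of_uncountable {s : Set Ordinal.{0}} (hs : s ⊆ Set.Iio omega1)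
    (hc : ¬ s.Countable) {c : Ordinal.{0}} (hcω : c < omega1) : ∃ y ∈ s, c < y := by
  by_contra h
  push_neg at h
  apply hc
  have hsucc : Order.succ c < omega1 := by
    have : Order.IsSuccLimit omega1 := Cardinal.isSuccLimit_ord Cardinal.aleph0_lt_aleph_one.le
    exact this.succ_lt hcω
  exact (countable_Iio_omega1 hsucc).mono (fun y hy => Order.lt_succ_iff.2 (h y hy))

lemma strictMono_unique {f g : ℕ → Ordinal.{0}} (hf : StrictMono f) (hg : StrictMono g)
    (h : Set.range f = Set.range g) : f = g := by
  have key : ∀ (f g : ℕ → Ordinal.{0}), StrictMono f → StrictMono g →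
      Set.range f ⊆ Set.range g → ∀ n, (∀ m < n, f m = g m) → g n ≤ f n := by
    intro f g hf hg hr n ih
    obtain ⟨m, hm⟩ := hr (Set.mem_range_self n)
    rcases lt_or_ge m n with hmn | hmn
    · exfalso
      have h2 : f m < f n := hf hmn
      rw [ih m hmn, hm] at h2
      exact absurd h2 (lt_irrefl _)
    · calc g n ≤ g m := hg.monotone hmn
        _ = f n := hm
  funext n
  induction n using Nat.strong_induction_on with
  | _ n ih =>
    exact le_antisymm (key g f hg hf h.ge n (fun m hm => (ih m hm).symm))
      (key f g hf hg h.le n ih)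

lemma infinite_of_frequently (α : ℕ → Ordinal.{0}) (B : Set Ordinal.{0}) {c : ℝ} (hc : 0 < c)
    (h : ∃ᶠ n in atTop, c * n < (((Finset.range n).filter (fun k => α k ∈ B)).card : ℝ)) :
    {k : ℕ | α k ∈ B}.Infinite := by
  rw [Filter.frequently_atTop] at h
  apply Set.infinite_of_not_bddAbove
  rintro ⟨N, hN⟩
  obtain ⟨n, hge, hn⟩ := h ⌈((N:ℝ)+2)/c⌉₊
  have hcard : ((Finset.range n).filter (fun k => α k ∈ B)).card ≤ N + 1 := by
    apply le_trans (Finset.card_le_card (show _ ⊆ Finset.range (N+1) from ?_))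
    · simp
    · intro k hk
      simp only [Finset.mem_filter, Finset.mem_range] at hk ⊢
      exact Nat.lt_succ_of_le (hN hk.2)
  have hn' : ((N:ℝ)+2)/c ≤ n := le_trans (Nat.le_ceil _) (by exact_mod_cast hge)
  have : (N:ℝ) + 2 ≤ c * n := by
    rw [div_le_iff₀ hc] at hn'
    linarith
  have hcard' : (((Finset.range n).filter (fun k => α k ∈ B)).card : ℝ) ≤ N + 1 := by
    exact_mod_cast hcard
  linarith



lemma count_filter_eq (α : ℕ → Ordinal.{0}) (A B : Set Ordinal.{0}) (hBA : B ⊆ A)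
    (hinf : {k : ℕ | α k ∈ A}.Infinite) (n : ℕ) :
    ((Finset.range (Nat.count (fun k => α k ∈ A) n)).filter
        (fun j => α (Nat.nth (fun k => α k ∈ A) j) ∈ B)).card
      = ((Finset.range n).filter (fun k => α k ∈ B)).card := by
  set p : ℕ → Prop := fun k => α k ∈ A with hp
  have hinf' : (setOf p).Infinite := hinf
  apply Finset.card_bij' (fun j _ => Nat.nth p j) (fun k _ => Nat.count p k)
  · intro j hj
    simp only [Finset.mem_filter, Finset.mem_range] at hj ⊢
    exact ⟨Nat.nth_lt_of_lt_count hj.1, hj.2⟩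
  · intro k hk
    simp only [Finset.mem_filter, Finset.mem_range] at hk ⊢
    have hpk : p k := hBA hk.2
    constructor
    · exact Nat.count_strict_mono hpk hk.1
    · rw [Nat.nth_count hpk]; exact hk.2
  · intro j hj
    exact Nat.count_nth_of_infinite hinf' j
  · intro k hk
    simp only [Finset.mem_filter, Finset.mem_range] at hk
    exact Nat.nth_count (hBA hk.2)

end Helpers

/-- Claim 7.4: Let `a ∈ (0,1)`, `a ≤ b < √a`, `S ⊆ Lim(ω₁)` stationary, and let
`⟨A_δ : δ ∈ S⟩` (given by the cofinal enumerations `α δ`) witness `♣_S^{sup ≥ a}`.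
Let `A ⊆ ω₁` be uncountable such that for every `δ ∈ S` the hit ratio of `A` along
`α δ` is eventually below `b`.  Let `S'` be the set of `δ ∈ S` where the limsup of this
ratio is still `≥ a`, and for `δ ∈ S'` let `β δ` enumerate `B_δ = A_δ ∩ A` in increasing
order.  Then for every uncountable `B ⊆ A`, the set of `δ ∈ S'` at which the limsup of
the hit ratio of `B` along `β δ` is `≥ b` is stationary. -/
theorem clubSuitSup_claim (a b : ℝ) (ha0 : 0 < a) (ha1 : a < 1)
    (hab : a ≤ b) (hb : b < Real.sqrt a)
    (S : Set Ordinal.{0}) (hS : S ⊆ limOmega1) (hstat : IsStatIn S)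
    (α : Ordinal.{0} → ℕ → Ordinal.{0}) (hα : GoodSeq S α)
    (hwit : ∀ A : Set Ordinal.{0}, A ⊆ Set.Iio omega1 → ¬ A.Countable →
      ∃ δ ∈ S, a ≤ Filter.limsup (hitRatio (α δ) A) Filter.atTop)
    (A : Set Ordinal.{0}) (hA1 : A ⊆ Set.Iio omega1) (hA2 : ¬ A.Countable)
    (hsmall : ∀ δ ∈ S, ∀ᶠ n in Filter.atTop, hitRatio (α δ) A n < b)
    (β : Ordinal.{0} → ℕ → Ordinal.{0})
    (hβ : ∀ δ ∈ {δ ∈ S | a ≤ Filter.limsup (hitRatio (α δ) A) Filter.atTop},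
      StrictMono (β δ) ∧ Set.range (β δ) = Set.range (α δ) ∩ A) :
    ∀ B : Set Ordinal.{0}, B ⊆ A → ¬ B.Countable →
      IsStatIn {δ ∈ {δ ∈ S | a ≤ Filter.limsup (hitRatio (α δ) A) Filter.atTop} |
        b ≤ Filter.limsup (hitRatio (β δ) B) Filter.atTop} := by
  
  have hb0 : 0 < b := lt_of_lt_of_le ha0 hab
  have hsq : b^2 < a := by
    nlinarith [Real.sq_sqrt ha0.le, Real.sqrt_nonneg a]
  intro B hBA hBunc
  constructor
  · rintro δ ⟨⟨hδS, -⟩, -⟩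
    exact (hS hδS).1
  intro C hC
  have hBsub : B ⊆ Set.Iio omega1 := fun x hx => hA1 (hBA hx)
  set nB : Ordinal.{0} → Ordinal.{0} := fun c => sInf (B ∩ Set.Ioi c) with hnBdef
  have hnB_mem : ∀ c < omega1, nB c ∈ B ∧ c < nB c := by
    intro c hc
    obtain ⟨y, hy, hcy⟩ := exists_gt_of_uncountable hBsub hBunc hc
    have := csInf_mem (⟨y, hy, hcy⟩ : (B ∩ Set.Ioi c).Nonempty)
    exact ⟨this.1, this.2⟩
  set B' : Set Ordinal.{0} := nB '' C with hB'def
  have hB'B : B' ⊆ B := by rintro x ⟨c, hc, rfl⟩; exact (hnB_mem c (hC.1 hc)).1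
  have hB'A : B' ⊆ A := fun x hx => hBA (hB'B hx)
  have hB'w : B' ⊆ Set.Iio omega1 := fun x hx => hBsub (hB'B hx)
  have hB'unc : ¬ B'.Countable := by
    intro hcnt
    obtain ⟨η, hη, hbound⟩ := bounded_of_countable hB'w hcnt
    obtain ⟨c, hcC, hηc⟩ := hC.2.2 η hη
    have h1 := (hnB_mem c (hC.1 hcC)).2
    have h2 := hbound _ (Set.mem_image_of_mem nB hcC)
    exact absurd (hηc.trans h1) (not_lt.2 h2.le)
  obtain ⟨δ, hδS, hδlim⟩ := hwit B' hB'w hB'unc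
  have bdd_le : ∀ (u : Set Ordinal.{0}) (γ : ℕ → Ordinal.{0}),
      Filter.IsBoundedUnder (· ≤ ·) Filter.atTop (hitRatio γ u) :=
    fun u γ => Filter.isBoundedUnder_of ⟨1, fun n => hitRatio_le_one γ u n⟩
  have bdd_ge : ∀ (u : Set Ordinal.{0}) (γ : ℕ → Ordinal.{0}),
      Filter.IsBoundedUnder (· ≥ ·) Filter.atTop (hitRatio γ u) :=
    fun u γ => Filter.isBoundedUnder_of ⟨0, fun n => hitRatio_nonneg γ u n⟩
  have hδS' : a ≤ Filter.limsup (hitRatio (α δ) A) Filter.atTop :=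
    le_trans hδlim (Filter.limsup_le_limsup
      (Filter.Eventually.of_forall fun n => hitRatio_mono (α δ) hB'A n)
      ((bdd_ge _ _).isCoboundedUnder_le) (bdd_le _ _))
  have hδmem : δ ∈ {δ ∈ S | a ≤ Filter.limsup (hitRatio (α δ) A) Filter.atTop} := ⟨hδS, hδS'⟩
  obtain ⟨hβmono, hβrange⟩ := hβ δ hδmem
  obtain ⟨hαmono, hαlt, hαcof⟩ := hα δ hδS
  have hδw : δ < omega1 := (hS hδS).1
  have hδl : Order.IsSuccLimit δ := (hS hδS).2
  have hfreq : ∃ᶠ n in Filter.atTop, b^2 < hitRatio (α δ) B' n :=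
    Filter.frequently_lt_of_lt_limsup ((bdd_ge _ _).isCoboundedUnder_le)
      (lt_of_lt_of_le hsq hδlim)
  classical
  have hfreq' : ∃ᶠ n in Filter.atTop,
      b^2 * n < (((Finset.range n).filter (fun k => α δ k ∈ B')).card : ℝ) := by
    refine hfreq.mono fun n hn => ?_
    rcases Nat.eq_zero_or_pos n with rfl | hpos
    · exfalso
      have h0 : hitRatio (α δ) B' 0 = 0 := by unfold hitRatio; simp
      rw [h0] at hn; nlinarith
    · have hn' : (0:ℝ) < n := by exact_mod_cast hpos
      unfold hitRatio at hn
      rw [lt_div_iff₀ hn'] at hn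
      linarith [hn]
  have hB'inf : {k : ℕ | α δ k ∈ B'}.Infinite :=
    infinite_of_frequently (α δ) B' (by positivity) hfreq'
  set p : ℕ → Prop := fun k => α δ k ∈ A with hpdef
  have hAinf : (setOf p).Infinite := hB'inf.mono (fun k hk => hB'A hk)
  have hβeq : β δ = fun j => α δ (Nat.nth p j) := by
    apply strictMono_unique hβmono
    · exact fun i j hij => hαmono ((Nat.nth_lt_nth hAinf).2 hij)
    · rw [hβrange]
      ext x
      constructor
      · rintro ⟨⟨k, rfl⟩, hxA⟩
        exact ⟨Nat.count p k, by simp only; rw [Nat.nth_count hxA]⟩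
      · rintro ⟨j, rfl⟩
        exact ⟨⟨Nat.nth p j, rfl⟩, Nat.nth_mem_of_infinite hAinf j⟩
  have hδC : δ ∈ C := by
    apply hC.2.1 δ hδw hδl
    intro γ hγ
    obtain ⟨n₀, hn₀⟩ := hαcof γ hγ
    obtain ⟨k₁, hk₁B, hk₁⟩ := hB'inf.exists_gt n₀
    obtain ⟨k₂, hk₂B, hk₂⟩ := hB'inf.exists_gt k₁
    obtain ⟨c, hcC, hcy⟩ := hk₂B
    refine ⟨c, hcC, ?_, ?_⟩
    · have hxc : α δ k₁ ≤ c := by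
        by_contra hcx
        push_neg at hcx
        have hle : nB c ≤ α δ k₁ := csInf_le' ⟨hB'B hk₁B, hcx⟩
        rw [hcy] at hle
        exact absurd (hαmono hk₂) (not_lt.2 hle)
      exact lt_of_lt_of_le (lt_of_lt_of_le hn₀ (hαmono.monotone hk₁.le)) hxc
    · have h1 := (hnB_mem c (hC.1 hcC)).2
      rw [hcy] at h1
      exact h1.trans (hαlt k₂)
  have hsmallδ := hsmall δ hδS
  rw [Filter.eventually_atTop] at hsmallδ
  obtain ⟨n₁, hn₁⟩ := hsmallδ
  have hmain : b ≤ Filter.limsup (hitRatio (β δ) B) Filter.atTop := by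
    apply Filter.le_limsup_of_frequently_le ?_ (bdd_le _ _)
    rw [Filter.frequently_atTop]
    intro N
    rw [Filter.frequently_atTop] at hfreq'
    obtain ⟨n, hge, hn⟩ := hfreq' (max n₁ ⌈(N:ℝ)/b^2⌉₊)
    set m := Nat.count p n with hmdef
    have hcount : m = ((Finset.range n).filter (fun k => α δ k ∈ A)).card :=
      Nat.count_eq_card_filter_range p n
    have hB'card_le : (((Finset.range n).filter (fun k => α δ k ∈ B')).card : ℝ) ≤ m := by
      rw [hcount]
      exact_mod_cast Finset.card_le_card
        (Finset.monotone_filter_right _ (fun k _ hk => hB'A hk))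
    have hNm : N ≤ m := by
      have h1 : ((N:ℝ)/b^2) ≤ n := le_trans (Nat.le_ceil _)
        (by exact_mod_cast le_trans (le_max_right _ _) hge)
      have h2 : (N:ℝ) ≤ b^2 * n := by
        rw [div_le_iff₀ (by positivity)] at h1; linarith
      have h3 : (N:ℝ) ≤ m := le_trans h2 (le_trans hn.le hB'card_le)
      exact_mod_cast h3
    refine ⟨m, hNm, ?_⟩
    have hnpos : 0 < n := by
      rcases Nat.eq_zero_or_pos n with rfl | h
      · exfalso; simp at hn
      · exact h
    have hnR : (0:ℝ) < n := by exact_mod_cast hnpos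
    have hmlt : (m:ℝ) < b * n := by
      have h4 := hn₁ n (le_trans (le_max_left _ _) hge)
      unfold hitRatio at h4
      rw [div_lt_iff₀ hnR] at h4
      rw [hcount]; exact_mod_cast h4
    have hmpos : (0:ℝ) < m := lt_of_le_of_lt (by positivity) (lt_of_lt_of_le hn hB'card_le)
    have hkey : b ≤ hitRatio (β δ) B' m := by
      have hnum : ((Finset.range m).filter (fun j => β δ j ∈ B')).card
          = ((Finset.range n).filter (fun k => α δ k ∈ B')).card := by
        rw [hβeq, hmdef]
        exact count_filter_eq (α δ) A B' hB'A hAinf n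
      unfold hitRatio
      rw [hnum, le_div_iff₀ hmpos]
      calc b * (m:ℝ) ≤ b * (b * n) := by nlinarith
        _ = b^2 * n := by ring
        _ ≤ _ := hn.le
    exact le_trans hkey (hitRatio_mono (β δ) hB'B m)
  exact ⟨δ, ⟨hδmem, hmain⟩, hδC⟩
end
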